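/- arXiv:2003.08053 — 3 statements merged into one kernel-verified Lean document; each statement's English description precedes it below -/
import Mathlib

section
/- Let Γ be a commutative thick weakly distance-regular digraph with relations Γ_ĩ indexed by two-way distances. If for some l > 1 the product set Γ_ĩ^l Γ_j̃ intersects Γ_ĩ^{l-1} Γ_j̃^2 nontrivially, then ĩ = j̃. -/
/-!
Common framework: commutative thick weakly distance-regular digraphs.
-/

variable {V : Type*}

/-- There is a directed walk of length `n` from `x` to `y`. -/
def HasWalk (adj : V → V → Prop) (x y : V) (n : ℕ) : Prop :=
  ∃ f : ℕ → V, f 0 = x ∧ f n = y ∧ ∀ i < n, adj (f i) (f (i + 1))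

/-- Directed distance `∂(x,y)`. -/
noncomputable def ddist (adj : V → V → Prop) (x y : V) : ℕ :=
  sInf {n | HasWalk adj x y n}

/-- Two-way distance `∂̃(x,y) = (∂(x,y), ∂(y,x))`. -/
noncomputable def tdist (adj : V → V → Prop) (x y : V) : ℕ × ℕ :=
  (ddist adj x y, ddist adj y x)

/-- The pair `i` is an attained two-way distance, i.e. `i ∈ ∂̃(Γ)`. -/
def Attained (adj : V → V → Prop) (i : ℕ × ℕ) : Prop :=
  ∃ x y : V, tdist adj x y = i

/-- Intersection number `p^h_{i,j}`: for attained `h` it is the common cardinality of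
`{z | ∂̃(x,z) = i, ∂̃(z,y) = j}` over pairs with `∂̃(x,y) = h` (and `0` otherwise). -/
noncomputable def pnum (adj : V → V → Prop) (h i j : ℕ × ℕ) : ℕ :=
  sSup {n | ∃ x y : V, tdist adj x y = h ∧
    n = Set.ncard {z : V | tdist adj x z = i ∧ tdist adj z y = j}}

/-- Valency `k_i = |Γ_i(x)|`. -/
noncomputable def kval (adj : V → V → Prop) (i : ℕ × ℕ) : ℕ :=
  pnum adj (0, 0) i i.swap

/-- Adjacency of the subdigraph `Δ_J`: arcs of type `(1, t-1)` for `t ∈ J`. -/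
def deltaAdj (adj : V → V → Prop) (J : Set ℕ) (u v : V) : Prop :=
  ∃ t ∈ J, tdist adj u v = (1, t - 1)

/-- A circuit of length `s`. -/
def IsCircuit (adj : V → V → Prop) (s : ℕ) (f : ℕ → V) : Prop :=
  0 < s ∧ f s = f 0 ∧ ∀ i < s, adj (f i) (f (i + 1))

/-- Strongly connected. -/
def IsStrong (adj : V → V → Prop) : Prop :=
  ∀ x y : V, ∃ n, HasWalk adj x y n

/-- Weakly distance-regular: the intersection numbers are well defined. -/
def IsWDR (adj : V → V → Prop) : Prop :=
  ∀ (i j : ℕ × ℕ) (x y x' y' : V), tdist adj x y = tdist adj x' y' →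
    Set.ncard {z : V | tdist adj x z = i ∧ tdist adj z y = j}
      = Set.ncard {z : V | tdist adj x' z = i ∧ tdist adj z y' = j}

/-- Thick: `p^h_{i,i}, p^h_{i,i*} ∈ {0, k_i}`. -/
def IsThick (adj : V → V → Prop) : Prop :=
  ∀ h i : ℕ × ℕ,
    (pnum adj h i i = 0 ∨ pnum adj h i i = kval adj i) ∧
    (pnum adj h i i.swap = 0 ∨ pnum adj h i i.swap = kval adj i)

/-- A thick weakly distance-regular digraph (as a property of an adjacency relation). -/
def IsWDRThick (adj : V → V → Prop) : Prop :=
  IsStrong adj ∧ IsWDR adj ∧ IsThick adj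

/-- A commutative thick weakly distance-regular digraph. -/
structure CTWDR (V : Type*) [Fintype V] where
  adj : V → V → Prop
  loopless : ∀ v, ¬ adj v v
  strong : IsStrong adj
  wdr : IsWDR adj
  comm : ∀ (i j : ℕ × ℕ) (x y : V),
    Set.ncard {z : V | tdist adj x z = i ∧ tdist adj z y = j}
      = Set.ncard {z : V | tdist adj x z = j ∧ tdist adj z y = i}
  thick : IsThick adj

namespace CTWDR

variable {V : Type*} [Fintype V] (G : CTWDR V)

/-- Product `EF` of two sets of relations (relations identified with two-way distances). -/
def prodS (E F : Set (ℕ × ℕ)) : Set (ℕ × ℕ) :=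
  {h | ∃ i ∈ E, ∃ j ∈ F, pnum G.adj h i j ≠ 0}

/-- Powers `Γ_i^l` (with `Γ_i^0 = {Γ_{(0,0)}}` and `Γ_i^1 = {Γ_i}`). -/
def pow (i : ℕ × ℕ) : ℕ → Set (ℕ × ℕ)
  | 0 => {(0, 0)}
  | 1 => {i}
  | n + 2 => G.prodS (pow i (n + 1)) {i}

/-- The pair `(1, s-1)` is pure: every circuit of length `s` containing an arc of type
`(1, s-1)` consists of arcs of type `(1, s-1)`. -/
def Pure (s : ℕ) : Prop :=
  ∀ f : ℕ → V, IsCircuit G.adj s f →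
    (∃ i < s, tdist G.adj (f i) (f (i + 1)) = (1, s - 1)) →
    ∀ i < s, tdist G.adj (f i) (f (i + 1)) = (1, s - 1)

/-- `(1, s-1)` is mixed. -/
def Mixed (s : ℕ) : Prop := ¬ G.Pure s

/-- Configuration `C(q)` exists. -/
def Cexists (q : ℕ) : Prop :=
  pnum G.adj (1, q - 2) (1, q - 1) (1, q - 1) ≠ 0 ∧ G.Pure (q - 1)

/-- Configuration `D(q)` exists. -/
def Dexists (q : ℕ) : Prop :=
  pnum G.adj (1, q - 1) (1, q - 2) (q - 2, 1) ≠ 0 ∧ G.Pure (q - 1)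

/-- A closed set of relations: `Γ_{i*}Γ_j ⊆ F` for all `i, j ∈ F`. -/
def Closed (F : Set (ℕ × ℕ)) : Prop :=
  ∀ i ∈ F, ∀ j ∈ F, G.prodS {i.swap} {j} ⊆ F

/-- The minimal closed set `⟨F⟩` containing `F`. -/
def genClosed (F : Set (ℕ × ℕ)) : Set (ℕ × ℕ) :=
  ⋂₀ {C | F ⊆ C ∧ G.Closed C}

/-- The block `F_J(x)` of the closed set generated by `{Γ_{1,t-1}}_{t ∈ J}`. -/
def block (J : Set ℕ) (x : V) : Set V :=
  {y | tdist G.adj x y ∈ G.genClosed {i | ∃ t ∈ J, i = (1, t - 1)}}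

end CTWDR

section Aux

variable {V : Type*} [Fintype V]

lemma aux_ddist_self (adj : V → V → Prop) (x : V) : ddist adj x x = 0 := by
  have h0 : HasWalk adj x x 0 :=
    ⟨fun _ => x, rfl, rfl, fun i hi => absurd hi (Nat.not_lt_zero i)⟩
  exact Nat.sInf_eq_zero.mpr (Or.inl h0)

lemma aux_tdist_self (adj : V → V → Prop) (x : V) : tdist adj x x = (0, 0) := by
  simp [tdist, aux_ddist_self]

lemma aux_tdist_swap (adj : V → V → Prop) (x y : V) :
    tdist adj y x = (tdist adj x y).swap := rfl

namespace CTWDR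

variable (G : CTWDR V)

lemma pnum_eq' {x y : V} {h : ℕ × ℕ} (hxy : tdist G.adj x y = h) (i j : ℕ × ℕ) :
    pnum G.adj h i j
      = Set.ncard {z : V | tdist G.adj x z = i ∧ tdist G.adj z y = j} := by
  have hset : {n | ∃ x' y' : V, tdist G.adj x' y' = h ∧
      n = Set.ncard {z : V | tdist G.adj x' z = i ∧ tdist G.adj z y' = j}}
      = {Set.ncard {z : V | tdist G.adj x z = i ∧ tdist G.adj z y = j}} := by
    ext n
    simp only [Set.mem_setOf_eq, Set.mem_singleton_iff]
    constructor
    · rintro ⟨x', y', h', rfl⟩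
      exact G.wdr i j x' y' x y (h'.trans hxy.symm)
    · rintro rfl
      exact ⟨x, y, hxy, rfl⟩
  unfold pnum
  rw [hset, csSup_singleton]

lemma attained_of_pnum {h i j : ℕ × ℕ} (hp : pnum G.adj h i j ≠ 0) :
    ∃ x y : V, tdist G.adj x y = h := by
  by_contra hc
  push_neg at hc
  refine hp ?_
  unfold pnum
  have hempty : {n | ∃ x y : V, tdist G.adj x y = h ∧
      n = Set.ncard {z : V | tdist G.adj x z = i ∧ tdist G.adj z y = j}} = ∅ := by
    ext n
    simp only [Set.mem_setOf_eq, Set.mem_empty_iff_false, iff_false, not_exists]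
    rintro x y ⟨hxy, -⟩
    exact hc x y hxy
  rw [hempty]
  simp

lemma exists_mid {x y : V} {h i j : ℕ × ℕ} (hxy : tdist G.adj x y = h)
    (hp : pnum G.adj h i j ≠ 0) :
    ∃ z : V, tdist G.adj x z = i ∧ tdist G.adj z y = j := by
  rw [G.pnum_eq' hxy] at hp
  exact Set.nonempty_of_ncard_ne_zero hp

lemma pnum_ne_zero {x y z : V} {h i j : ℕ × ℕ} (hxy : tdist G.adj x y = h)
    (hxz : tdist G.adj x z = i) (hzy : tdist G.adj z y = j) :
    pnum G.adj h i j ≠ 0 := by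
  rw [G.pnum_eq' hxy]
  have hne : ({w : V | tdist G.adj x w = i ∧ tdist G.adj w y = j}).Nonempty := ⟨z, hxz, hzy⟩
  exact ((Set.ncard_pos (Set.toFinite _)).mpr hne).ne'

lemma kval_eq' (i : ℕ × ℕ) (x : V) :
    kval G.adj i = Set.ncard {z : V | tdist G.adj x z = i} := by
  unfold kval
  rw [G.pnum_eq' (aux_tdist_self G.adj x)]
  congr 1
  ext z
  simp only [Set.mem_setOf_eq, and_iff_left_iff_imp]
  intro hz
  rw [aux_tdist_swap, hz]

lemma pnum_comm' {x y : V} {h : ℕ × ℕ} (hxy : tdist G.adj x y = h) (i j : ℕ × ℕ) :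
    pnum G.adj h i j = pnum G.adj h j i := by
  rw [G.pnum_eq' hxy, G.pnum_eq' hxy]
  exact G.comm i j x y

/-- Thickness transfer: if some `z` with `x →r z →r y` exists, then every
`r`-out-neighbor of `x` is `r`-related to `y`. -/
lemma thick_trans {r : ℕ × ℕ} {x z y z' : V} (hxz : tdist G.adj x z = r)
    (hzy : tdist G.adj z y = r) (hxz' : tdist G.adj x z' = r) :
    tdist G.adj z' y = r := by
  have hp : pnum G.adj (tdist G.adj x y) r r ≠ 0 := G.pnum_ne_zero rfl hxz hzy
  have hk : pnum G.adj (tdist G.adj x y) r r = kval G.adj r :=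
    ((G.thick (tdist G.adj x y) r).1).resolve_left hp
  have h1 : Set.ncard {w : V | tdist G.adj x w = r} ≤
      Set.ncard {w : V | tdist G.adj x w = r ∧ tdist G.adj w y = r} := by
    rw [← G.pnum_eq' rfl, hk, G.kval_eq' r x]
  have hsub : {w : V | tdist G.adj x w = r ∧ tdist G.adj w y = r}
      ⊆ {w : V | tdist G.adj x w = r} := fun w hw => hw.1
  have heq := Set.eq_of_subset_of_ncard_le hsub h1 (Set.toFinite _)
  have hz' : z' ∈ {w : V | tdist G.adj x w = r ∧ tdist G.adj w y = r} := by
    rw [heq]; exact hxz'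
  exact hz'.2

/-- Dual thickness transfer (via `r.swap`). -/
lemma thick_trans' {r : ℕ × ℕ} {a b c b' : V} (hab : tdist G.adj a b = r)
    (hbc : tdist G.adj b c = r) (hb'c : tdist G.adj b' c = r) :
    tdist G.adj a b' = r := by
  have h1 : tdist G.adj c b = r.swap := by rw [aux_tdist_swap, hbc]
  have h2 : tdist G.adj b a = r.swap := by rw [aux_tdist_swap, hab]
  have h3 : tdist G.adj c b' = r.swap := by rw [aux_tdist_swap, hb'c]
  have h4 := G.thick_trans h1 h2 h3
  rw [aux_tdist_swap, h4, Prod.swap_swap]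

/-- Members of `Γ_i^l` are realized by `i`-paths. -/
lemma pow_path (i : ℕ × ℕ) : ∀ l : ℕ, 1 ≤ l → ∀ e ∈ G.pow i l, ∀ a y : V,
    tdist G.adj a y = e →
    ∃ p : ℕ → V, p 0 = a ∧ p l = y ∧ ∀ t < l, tdist G.adj (p t) (p (t + 1)) = i := by
  intro l
  induction l with
  | zero => intro hl; exact absurd hl (by omega)
  | succ n ih =>
    intro _ e he a y hay
    match n, ih, he with
    | 0, _, he =>
      have he' : e = i := he
      refine ⟨fun t => if t = 0 then a else y, by simp, by simp, ?_⟩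
      intro t ht
      have ht0 : t = 0 := by omega
      subst ht0
      show tdist G.adj (if (0:ℕ) = 0 then a else y) (if (0:ℕ) + 1 = 0 then a else y) = _
      rw [if_pos rfl, if_neg (by omega)]
      exact hay.trans he'
    | (m + 1), ih, he =>
      obtain ⟨d, hd, j', hj', hpe⟩ := he
      rw [Set.mem_singleton_iff] at hj'
      subst hj'
      obtain ⟨z, haz, hzy⟩ := G.exists_mid hay hpe
      obtain ⟨p, hp0, hpm, hparc⟩ := ih (by omega) d hd a z haz
      refine ⟨fun t => if t = m + 2 then y else p t, by simp [hp0], by simp, ?_⟩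
      intro t ht
      show tdist G.adj (if t = m + 2 then y else p t)
        (if t + 1 = m + 2 then y else p (t + 1)) = _
      rcases Nat.lt_or_ge t (m + 1) with h1 | h1
      · rw [if_neg (by omega), if_neg (by omega)]
        exact hparc t h1
      · have ht1 : t = m + 1 := by omega
        subst ht1
        rw [if_neg (by omega), if_pos (by omega), hpm]
        exact hzy

end CTWDR

end Aux

/-- Lemma 2.1: if `Γ_i^l Γ_j ∩ Γ_i^{l-1} Γ_j^2 ≠ ∅` with `l > 1`, then `i = j`. -/
theorem stmt0 {V : Type*} [Fintype V] (G : CTWDR V) (i j : ℕ × ℕ)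
    (hi : Attained G.adj i) (hj : Attained G.adj j) (l : ℕ) (hl : 1 < l)
    (h : (G.prodS (G.pow i l) {j} ∩ G.prodS (G.pow i (l - 1)) (G.pow j 2)).Nonempty) :
    i = j := by
  obtain ⟨h0, hA, hB⟩ := h
  obtain ⟨k, rfl⟩ : ∃ k, l = k + 2 := ⟨l - 2, by omega⟩
  -- unpack membership in Γ_i^l Γ_j
  obtain ⟨e, he, j', hj', hpA⟩ := hA
  rw [Set.mem_singleton_iff] at hj'
  rw [hj'] at hpA
  -- unpack membership in Γ_i^{l-1} Γ_j^2
  obtain ⟨d, hd, g, hg, hpB⟩ := hB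
  have hd' : d ∈ G.pow i (k + 1) := by
    have : k + 2 - 1 = k + 1 := by omega
    rwa [this] at hd
  -- a base pair (x, y) with tdist x y = h0
  obtain ⟨x, y, hxy⟩ := G.attained_of_pnum hpA
  -- commutativity: realize j-then-e and g-then-d configurations at (x, y)
  rw [G.pnum_comm' hxy e j] at hpA
  obtain ⟨a1, hxa1, ha1y⟩ := G.exists_mid hxy hpA
  rw [G.pnum_comm' hxy d g] at hpB
  obtain ⟨b2, hxb2, hb2y⟩ := G.exists_mid hxy hpB
  -- g ∈ Γ_j Γ_j : realize middle vertex b1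
  obtain ⟨j1, hj1, j2, hj2, hpg⟩ := hg
  have hj1' : j1 = j := hj1
  have hj2' : j2 = j := hj2
  rw [hj1', hj2'] at hpg
  obtain ⟨b1, hxb1, hb1b2⟩ := G.exists_mid hxb2 hpg
  -- i-paths realizing e (length k+2 from a1 to y) and d (length k+1 from b2 to y)
  obtain ⟨p, hp0, hpl, hparc⟩ := G.pow_path i (k + 2) (by omega) e he a1 y ha1y
  obtain ⟨q, hq0, hql, hqarc⟩ := G.pow_path i (k + 1) (by omega) d hd' b2 y hb2y
  -- thickness: a1 is j-related to b2
  have hab2 : tdist G.adj a1 b2 = j := G.thick_trans hxb1 hb1b2 hxa1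
  -- backward transport along the two i-paths ending at y
  have htrans : ∀ s, s ≤ k → tdist G.adj (q (k - s)) (p (k + 2 - s)) = i := by
    intro s
    induction s with
    | zero =>
      intro _
      have harc := hqarc k (by omega)
      rw [hql, ← hpl] at harc
      simpa using harc
    | succ s ihs =>
      intro hs
      have ih1 := ihs (by omega)
      have hqa := hqarc (k - s - 1) (by omega)
      rw [show k - s - 1 + 1 = k - s from by omega] at hqa
      have hpa := hparc (k + 1 - s) (by omega)
      rw [show k + 1 - s + 1 = k + 2 - s from by omega] at hpa
      have hres := G.thick_trans' hqa ih1 hpa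
      rw [show k - (s + 1) = k - s - 1 from by omega,
        show k + 2 - (s + 1) = k + 1 - s from by omega]
      exact hres
  have hb2p2 : tdist G.adj b2 (p 2) = i := by
    have := htrans k le_rfl
    rw [show k - k = 0 from by omega, show k + 2 - k = 2 from by omega, hq0] at this
    exact this
  -- final step at the triangle (a1, p 2)
  have h01 := hparc 0 (by omega)
  rw [hp0] at h01
  have h12 := hparc 1 (by omega)
  have hmij : pnum G.adj (tdist G.adj a1 (p 2)) i j ≠ 0 := by
    rw [G.pnum_comm' rfl i j]
    exact G.pnum_ne_zero rfl hab2 hb2p2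
  obtain ⟨c, hac, hcp⟩ := G.exists_mid rfl hmij
  have hfin : tdist G.adj c (p 2) = i := G.thick_trans h01 h12 hac
  exact hfin.symm.trans hcp
end

section
/- Let Γ be a commutative thick weakly distance-regular digraph in which C(q) exists (p^{(1,q-2)}_{(1,q-1),(1,q-1)} ≠ 0 and (1,q-2) is pure). Then Γ_{1,q-1} Γ_{1,q-2}^{i-1} = {Γ_{i,q-i}} for all 1 ≤ i ≤ q-1. -/
/-!
Common framework: commutative thick weakly distance-regular digraphs.
-/

variable {V : Type*}

namespace Aux

variable {adj : V → V → Prop}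

lemma hasWalk_zero_iff {x y : V} : HasWalk adj x y 0 ↔ x = y := by
  constructor
  · rintro ⟨f, h0, hn, -⟩; rw [← h0, hn]
  · rintro rfl; exact ⟨fun _ => x, rfl, rfl, by omega⟩

lemma hasWalk_one_iff {x y : V} : HasWalk adj x y 1 ↔ adj x y := by
  constructor
  · rintro ⟨f, h0, hn, hs⟩
    have := hs 0 (by omega); rwa [h0, hn] at this
  · intro h
    refine ⟨fun n => if n = 0 then x else y, by simp, by simp, ?_⟩
    intro i hi
    have : i = 0 := by omega
    simp [this, h]

lemma walk_concat {x y z : V} {m n : ℕ} (h1 : HasWalk adj x y m)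
    (h2 : HasWalk adj y z n) : HasWalk adj x z (m + n) := by
  obtain ⟨f, hf0, hfm, hfs⟩ := h1
  obtain ⟨g, hg0, hgn, hgs⟩ := h2
  refine ⟨fun i => if i ≤ m then f i else g (i - m), by simp [hf0], ?_, ?_⟩
  · by_cases h : n = 0
    · simp [h] at hgn ⊢
      rw [hfm, ← hg0, hgn]
    · have : ¬ (m + n ≤ m) := by omega
      simp [this, hgn]
  · intro i hi
    by_cases h : i + 1 ≤ m
    · simp only [if_pos (by omega : i ≤ m), if_pos h]
      exact hfs i (by omega)
    · by_cases h' : i ≤ m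
      · have hi' : i = m := by omega
        have hn : 0 < n := by omega
        have h2 := hgs 0 hn
        rw [hg0] at h2
        show adj (if i ≤ m then f i else g (i-m)) (if i+1 ≤ m then f (i+1) else g (i+1-m))
        have e1 : (if i ≤ m then f i else g (i-m)) = y := by
          rw [if_pos h', hi', hfm]
        have e2 : (if i+1 ≤ m then f (i+1) else g (i+1-m)) = g (0+1) := by
          rw [if_neg h]; congr 1; omega
        rw [e1, e2]; exact h2
      · simp only [if_neg h', if_neg h]
        have := hgs (i - m) (by omega)
        convert this using 2
        omega

lemma walk_step {x y z : V} {n : ℕ} (h1 : HasWalk adj x y n) (h2 : adj y z) :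
    HasWalk adj x z (n + 1) :=
  walk_concat h1 (hasWalk_one_iff.mpr h2)

lemma ddist_le {x y : V} {n : ℕ} (h : HasWalk adj x y n) : ddist adj x y ≤ n :=
  Nat.sInf_le h

lemma ddist_self (x : V) : ddist adj x x = 0 :=
  Nat.le_zero.mp (ddist_le (hasWalk_zero_iff.mpr rfl))

variable (hS : IsStrong adj)
include hS

lemma exists_walk_ddist (x y : V) : HasWalk adj x y (ddist adj x y) :=
  Nat.sInf_mem (hS x y)

lemma ddist_eq_zero_iff {x y : V} : ddist adj x y = 0 ↔ x = y := by
  constructor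
  · intro h
    have := exists_walk_ddist hS x y
    rw [h, hasWalk_zero_iff] at this; exact this
  · rintro rfl; exact ddist_self x

lemma ddist_triangle (x y z : V) :
    ddist adj x z ≤ ddist adj x y + ddist adj y z :=
  ddist_le (walk_concat (exists_walk_ddist hS x y) (exists_walk_ddist hS y z))

lemma adj_of_ddist_one {x y : V} (h : ddist adj x y = 1) : adj x y := by
  have := exists_walk_ddist hS x y
  rw [h, hasWalk_one_iff] at this; exact this

end Aux
section Aux2
variable {V : Type*} [Fintype V] (G : CTWDR V)

set_option linter.unusedSectionVars false

namespace Aux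

lemma tdist_swap (adj : V → V → Prop) (x y : V) :
    tdist adj y x = (tdist adj x y).swap := rfl

/-- shorthand for the count -/
noncomputable def cnt (adj : V → V → Prop) (x y : V) (i j : ℕ × ℕ) : ℕ :=
  Set.ncard {z : V | tdist adj x z = i ∧ tdist adj z y = j}

lemma cnt_bdd (adj : V → V → Prop) (x y : V) (i j : ℕ × ℕ) :
    cnt adj x y i j ≤ Fintype.card V := by
  unfold cnt
  calc Set.ncard {z : V | tdist adj x z = i ∧ tdist adj z y = j}
      ≤ Set.ncard (Set.univ : Set V) :=
        Set.ncard_le_ncard (Set.subset_univ _) Set.finite_univ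
    _ = Fintype.card V := by rw [Set.ncard_univ, Nat.card_eq_fintype_card]

lemma pnum_eq {h i j : ℕ × ℕ} {x y : V} (hxy : tdist G.adj x y = h) :
    pnum G.adj h i j = cnt G.adj x y i j := by
  unfold pnum
  apply le_antisymm
  · refine csSup_le ⟨cnt G.adj x y i j, x, y, hxy, rfl⟩ ?_
    rintro n ⟨x', y', hxy', rfl⟩
    exact le_of_eq (G.wdr i j x' y' x y (hxy'.trans hxy.symm))
  · apply le_csSup
    · exact ⟨Fintype.card V, by rintro n ⟨x', y', hxy', rfl⟩; exact cnt_bdd _ _ _ _ _⟩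
    · exact ⟨x, y, hxy, rfl⟩

lemma pnum_attained {h i j : ℕ × ℕ} (hp : pnum G.adj h i j ≠ 0) :
    ∃ x y : V, tdist G.adj x y = h := by
  by_contra hno
  push_neg at hno
  apply hp
  unfold pnum
  have : {n | ∃ x y : V, tdist G.adj x y = h ∧
      n = Set.ncard {z : V | tdist G.adj x z = i ∧ tdist G.adj z y = j}} = ∅ := by
    ext n; simp only [Set.mem_setOf_eq, Set.mem_empty_iff_false, iff_false]
    rintro ⟨x, y, hxy, -⟩; exact hno x y hxy
  rw [this, csSup_empty]
  rfl

lemma pnum_mem {h i j : ℕ × ℕ} (hp : pnum G.adj h i j ≠ 0) {x y : V}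
    (hxy : tdist G.adj x y = h) :
    ∃ z : V, tdist G.adj x z = i ∧ tdist G.adj z y = j := by
  rw [pnum_eq G hxy] at hp
  exact Set.nonempty_of_ncard_ne_zero hp

lemma pnum_ne_zero {h i j : ℕ × ℕ} {x y z : V} (hxy : tdist G.adj x y = h)
    (hxz : tdist G.adj x z = i) (hzy : tdist G.adj z y = j) :
    pnum G.adj h i j ≠ 0 := by
  rw [pnum_eq G hxy]
  unfold cnt
  rw [Ne, Set.ncard_eq_zero (Set.toFinite _)]
  intro hemp
  rw [Set.eq_empty_iff_forall_notMem] at hemp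
  exact hemp z ⟨hxz, hzy⟩

lemma tdist_self (x : V) : tdist G.adj x x = (0, 0) := by
  unfold tdist; rw [ddist_self]

lemma kval_eq (i : ℕ × ℕ) (x : V) :
    kval G.adj i = Set.ncard {z : V | tdist G.adj x z = i} := by
  unfold kval
  rw [pnum_eq G (tdist_self G x)]
  unfold cnt
  congr 1
  ext z
  simp only [Set.mem_setOf_eq, and_iff_left_iff_imp]
  intro hz
  rw [tdist_swap, hz]

lemma kval_swap (i : ℕ × ℕ) (x : V) : kval G.adj i = kval G.adj i.swap := by
  unfold kval
  rw [pnum_eq G (tdist_self G x), pnum_eq G (tdist_self G x), Prod.swap_swap]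
  unfold cnt
  exact G.comm i i.swap x x

lemma kval_in (i : ℕ × ℕ) (y : V) :
    kval G.adj i = Set.ncard {z : V | tdist G.adj z y = i} := by
  rw [kval_swap G i y, kval_eq G i.swap y]
  congr 1
  ext z
  simp only [Set.mem_setOf_eq, tdist_swap G.adj z y]
  constructor
  · intro h
    have := congrArg Prod.swap h
    simpa using this
  · intro h; rw [h]

lemma thick_out {h i : ℕ × ℕ} (hp : pnum G.adj h i i ≠ 0) {x y z : V}
    (hxy : tdist G.adj x y = h) (hxz : tdist G.adj x z = i) :
    tdist G.adj z y = i := by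
  have hsub : {w : V | tdist G.adj x w = i ∧ tdist G.adj w y = i}
      ⊆ {w : V | tdist G.adj x w = i} := fun w hw => hw.1
  have hcard : Set.ncard {w : V | tdist G.adj x w = i}
      ≤ Set.ncard {w : V | tdist G.adj x w = i ∧ tdist G.adj w y = i} := by
    have h1 : pnum G.adj h i i = kval G.adj i := by
      rcases (G.thick h i).1 with h' | h'
      · exact absurd h' hp
      · exact h'
    have h2 := pnum_eq G (i := i) (j := i) hxy
    have heq : Set.ncard {w : V | tdist G.adj x w = i}
        = Set.ncard {w : V | tdist G.adj x w = i ∧ tdist G.adj w y = i} := by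
      rw [← kval_eq G i x, ← h1, h2]; rfl
    exact le_of_eq heq
  have := Set.eq_of_subset_of_ncard_le hsub hcard (Set.toFinite _)
  have hz : z ∈ {w : V | tdist G.adj x w = i ∧ tdist G.adj w y = i} := by
    rw [this]; exact hxz
  exact hz.2

lemma thick_in {h i : ℕ × ℕ} (hp : pnum G.adj h i i ≠ 0) {x y z : V}
    (hxy : tdist G.adj x y = h) (hzy : tdist G.adj z y = i) :
    tdist G.adj x z = i := by
  have hsub : {w : V | tdist G.adj x w = i ∧ tdist G.adj w y = i}
      ⊆ {w : V | tdist G.adj w y = i} := fun w hw => hw.2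
  have hcard : Set.ncard {w : V | tdist G.adj w y = i}
      ≤ Set.ncard {w : V | tdist G.adj x w = i ∧ tdist G.adj w y = i} := by
    have h1 : pnum G.adj h i i = kval G.adj i := by
      rcases (G.thick h i).1 with h' | h'
      · exact absurd h' hp
      · exact h'
    have h2 := pnum_eq G (i := i) (j := i) hxy
    have heq : Set.ncard {w : V | tdist G.adj w y = i}
        = Set.ncard {w : V | tdist G.adj x w = i ∧ tdist G.adj w y = i} := by
      rw [← kval_in G i y, ← h1, h2]; rfl
    exact le_of_eq heq
  have := Set.eq_of_subset_of_ncard_le hsub hcard (Set.toFinite _)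
  have hz : z ∈ {w : V | tdist G.adj x w = i ∧ tdist G.adj w y = i} := by
    rw [this]; exact hzy
  exact hz.1

end Aux
end Aux2
section Aux3
variable {V : Type*} [Fintype V] (G : CTWDR V) (q : ℕ)

set_option linter.unusedSectionVars false

namespace Aux

lemma tdist_fst {adj : V → V → Prop} {x y : V} {t1 t2 : ℕ}
    (h : tdist adj x y = (t1, t2)) : ddist adj x y = t1 := congrArg Prod.fst h

lemma tdist_snd {adj : V → V → Prop} {x y : V} {t1 t2 : ℕ}
    (h : tdist adj x y = (t1, t2)) : ddist adj y x = t2 := congrArg Prod.snd h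

lemma tdist_ext {adj : V → V → Prop} {x y : V} {t1 t2 : ℕ}
    (h1 : ddist adj x y = t1) (h2 : ddist adj y x = t2) :
    tdist adj x y = (t1, t2) := by
  unfold tdist; rw [h1, h2]

/-- A `B`-circuit: length `q-1`, all arcs of type `(1,q-2)`. -/
def IsBCirc (c : ℕ → V) : Prop :=
  c (q-1) = c 0 ∧ ∀ t < q-1, tdist G.adj (c t) (c (t+1)) = (1, q-2)

variable (hq : 3 ≤ q)
include hq

lemma bcirc_arc_ext {c : ℕ → V} (hc : IsBCirc G q c) (t : ℕ) :
    tdist G.adj (c (t % (q-1))) (c ((t+1) % (q-1))) = (1, q-2) := by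
  have hn : 0 < q - 1 := by omega
  have hr : t % (q-1) < q-1 := Nat.mod_lt _ hn
  have hstep : (t+1) % (q-1) = (t % (q-1) + 1) % (q-1) := by
    conv_lhs => rw [Nat.add_mod]
    rw [Nat.mod_eq_of_lt (by omega : 1 < q - 1)]
  by_cases h : t % (q-1) + 1 < q - 1
  · rw [hstep, Nat.mod_eq_of_lt h]
    exact hc.2 _ hr
  · have he : t % (q-1) + 1 = q - 1 := by omega
    rw [hstep, he, Nat.mod_self]
    have := hc.2 (t % (q-1)) hr
    rw [he] at this
    rw [← hc.1]
    exact this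

lemma bcirc_walk {c : ℕ → V} (hc : IsBCirc G q c) {a b : ℕ} (hab : a ≤ b) :
    HasWalk G.adj (c (a % (q-1))) (c (b % (q-1))) (b - a) := by
  induction b, hab using Nat.le_induction with
  | base => simpa using hasWalk_zero_iff.mpr rfl
  | succ b hab ih =>
    have harc := bcirc_arc_ext G q hq hc b
    have hadj : G.adj (c (b % (q-1))) (c ((b+1) % (q-1))) :=
      adj_of_ddist_one G.strong (tdist_fst harc)
    have := walk_step ih hadj
    have he : b - a + 1 = b + 1 - a := by omega
    rwa [he] at this

lemma bcirc_mod {c : ℕ → V} (hc : IsBCirc G q c) {a : ℕ} (ha : a ≤ q-1) :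
    c (a % (q-1)) = c a := by
  rcases Nat.lt_or_ge a (q-1) with h | h
  · rw [Nat.mod_eq_of_lt h]
  · have : a = q - 1 := by omega
    rw [this, Nat.mod_self, hc.1]

/-- Claim A : exact two-way distances along a pure circuit. -/
lemma bcirc_tdist {c : ℕ → V} (hc : IsBCirc G q c) {a b : ℕ} (hab : a ≤ b)
    (hb : b ≤ q-1) (h1 : 0 < b - a) (h2 : b - a < q-1) :
    tdist G.adj (c a) (c b) = (b - a, (q-1) - (b-a)) := by
  have hstrong := G.strong
  have ha' : a < q - 1 := by omega
  have hamod : c (a % (q-1)) = c a := bcirc_mod G q hq hc (by omega)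
  have hbmod : c (b % (q-1)) = c b := bcirc_mod G q hq hc hb
  -- upper bound forward
  have up1 : ddist G.adj (c a) (c b) ≤ b - a := by
    have := ddist_le (bcirc_walk G q hq hc hab)
    rwa [hamod, hbmod] at this
  -- upper bound backward
  have up2 : ddist G.adj (c b) (c a) ≤ (q-1) - (b-a) := by
    have hle : b ≤ (q-1) + a := by omega
    have := ddist_le (bcirc_walk G q hq hc hle)
    rw [hbmod] at this
    rw [Nat.add_mod_left, Nat.mod_eq_of_lt ha'] at this
    have he : (q-1) + a - b = (q-1) - (b-a) := by omega
    rwa [he] at this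
  -- lower bound backward
  have low2 : (q-1) - (b-a) ≤ ddist G.adj (c b) (c a) := by
    have harc := hc.2 a (by omega)
    have hback : ddist G.adj (c (a+1)) (c a) = q - 2 := tdist_snd harc
    have hfwd : ddist G.adj (c (a+1)) (c b) ≤ b - (a+1) := by
      have := ddist_le (bcirc_walk G q hq hc (by omega : a+1 ≤ b))
      rwa [bcirc_mod G q hq hc (by omega : a+1 ≤ q-1), hbmod] at this
    have htri := ddist_triangle hstrong (c (a+1)) (c b) (c a)
    omega
  -- lower bound forward
  have low1 : b - a ≤ ddist G.adj (c a) (c b) := by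
    have harc := bcirc_arc_ext G q hq hc b
    rw [hbmod] at harc
    have hback : ddist G.adj (c ((b+1) % (q-1))) (c b) = q - 2 := tdist_snd harc
    have hfwd : ddist G.adj (c ((b+1) % (q-1))) (c a) ≤ (q-1) + a - (b+1) := by
      have hle : b + 1 ≤ (q-1) + a := by omega
      have hw := ddist_le (bcirc_walk G q hq hc hle)
      rwa [Nat.add_mod_left, Nat.mod_eq_of_lt ha'] at hw
    have htri := ddist_triangle hstrong (c ((b+1) % (q-1))) (c a) (c b)
    omega
  exact tdist_ext (by omega) (by omega)

end Aux
end Aux3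
section Aux4
variable {V : Type*} [Fintype V] (G : CTWDR V) (q : ℕ)

set_option linter.unusedSectionVars false
set_option maxHeartbeats 1000000

namespace Aux

/-- A path all of whose arcs have type `(1,q-2)`. -/
def IsBPath (j : ℕ) (p : ℕ → V) : Prop :=
  ∀ t < j, tdist G.adj (p t) (p (t+1)) = (1, q-2)

variable (hC : G.Cexists q)
include hC

lemma three_le : 3 ≤ q := by
  by_contra hlt
  obtain ⟨x, y, hxy⟩ := pnum_attained G hC.1
  have h2 : q - 2 = 0 := by omega
  rw [h2] at hxy
  have hyx : ddist G.adj y x = 0 := tdist_snd hxy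
  have : y = x := (ddist_eq_zero_iff G.strong).mp hyx
  subst this
  have : ddist G.adj y y = 1 := tdist_fst hxy
  rw [ddist_self] at this
  exact absurd this.symm one_ne_zero

lemma pure_circ {x y : V} (hxy : tdist G.adj x y = (1, q-2)) :
    ∃ c : ℕ → V, IsBCirc G q c ∧ c 0 = x ∧ c 1 = y := by
  have hq := three_le G q hC
  have hyx : ddist G.adj y x = q - 2 := tdist_snd hxy
  obtain ⟨f, hf0, hfn, hfs⟩ := exists_walk_ddist G.strong y x
  rw [hyx] at hfn hfs
  set c : ℕ → V := fun t => if t = 0 then x else f (t-1) with hcdef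
  have hc0 : c 0 = x := by simp [hcdef]
  have hc1 : c 1 = y := by simp [hcdef, hf0]
  have hclast : c (q-1) = c 0 := by
    have h1 : q - 1 ≠ 0 := by omega
    have h2 : q - 1 - 1 = q - 2 := by omega
    simp only [hcdef, if_neg h1, if_pos rfl, h2, hfn]
  have hcirc : IsCircuit G.adj (q-1) c := by
    refine ⟨by omega, hclast, ?_⟩
    intro i hi
    rcases Nat.eq_zero_or_pos i with h0 | h0
    · subst h0
      rw [hc0, hc1]
      exact adj_of_ddist_one G.strong (tdist_fst hxy)
    · have h1 : i ≠ 0 := by omega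
      have h2 : i + 1 ≠ 0 := by omega
      simp only [hcdef, if_neg h1, if_neg h2]
      have := hfs (i-1) (by omega)
      have he : i - 1 + 1 = i := by omega
      rwa [he] at this
  have hpure := hC.2 c hcirc ⟨0, by omega, ?_⟩
  · refine ⟨c, ⟨hclast, ?_⟩, hc0, hc1⟩
    intro t ht
    have := hpure t ht
    have he : q - 1 - 1 = q - 2 := by omega
    rwa [he] at this
  · rw [hc0, hc1]
    have he : q - 1 - 1 = q - 2 := by omega
    rw [he]
    exact hxy

lemma ext_circ : ∀ j, 1 ≤ j → j ≤ q-2 → ∀ p : ℕ → V, IsBPath G q j p →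
    ∃ c : ℕ → V, IsBCirc G q c ∧ ∀ t ≤ j, c t = p t := by
  have hq := three_le G q hC
  intro j hj1
  induction j, hj1 using Nat.le_induction with
  | base =>
    intro _ p hp
    obtain ⟨c, hc, hc0, hc1⟩ := pure_circ G q hC (hp 0 (by omega))
    refine ⟨c, hc, ?_⟩
    intro t ht
    interval_cases t
    · exact hc0
    · exact hc1
  | succ j hj1 ih =>
    intro hj2 p hp
    obtain ⟨c, hc, hct⟩ := ih (by omega) p (fun t ht => hp t (by omega))
    have hq4 : 4 ≤ q := by omega
    -- distances on the circuit
    have h2 : tdist G.adj (c j) (c (j+2)) = (2, (q-1) - 2) := by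
      have := bcirc_tdist G q hq hc (by omega : j ≤ j + 2) (by omega : j + 2 ≤ q-1)
        (by omega) (by omega)
      have he : j + 2 - j = 2 := by omega
      rwa [he] at this
    have hp1 : tdist G.adj (c j) (c (j+1)) = (1, q-2) := hc.2 j (by omega)
    have hp2 : tdist G.adj (c (j+1)) (c (j+2)) = (1, q-2) := hc.2 (j+1) (by omega)
    have hpn : pnum G.adj (2, (q-1)-2) (1, q-2) (1, q-2) ≠ 0 :=
      pnum_ne_zero G h2 hp1 hp2
    have hxz : tdist G.adj (c j) (p (j+1)) = (1, q-2) := by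
      rw [hct j (by omega)]
      exact hp j (by omega)
    have hnew : tdist G.adj (p (j+1)) (c (j+2)) = (1, q-2) :=
      thick_out G hpn h2 hxz
    refine ⟨fun t => if t = j+1 then p (j+1) else c t, ⟨?_, ?_⟩, ?_⟩
    · have h1 : q - 1 ≠ j + 1 := by omega
      have h0 : (0:ℕ) ≠ j + 1 := by omega
      simp only [if_neg h1, if_neg h0]
      exact hc.1
    · intro t ht
      rcases Nat.lt_trichotomy t j with h | h | h
      · have e1 : t ≠ j + 1 := by omega
        have e2 : t + 1 ≠ j + 1 := by omega
        simp only [if_neg e1, if_neg e2]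
        exact hc.2 t ht
      · subst h
        have e1 : t ≠ t + 1 := by omega
        simp only [if_neg e1, if_pos rfl]
        rw [hct t (by omega)]
        exact hp t (by omega)
      · rcases Nat.lt_or_ge t (j+2) with h' | h'
        · have e1 : t = j + 1 := by omega
          subst e1
          have e2 : j + 1 + 1 ≠ j + 1 := by omega
          simp only [if_pos rfl, if_neg e2]
          exact hnew
        · have e1 : t ≠ j + 1 := by omega
          have e2 : t + 1 ≠ j + 1 := by omega
          simp only [if_neg e1, if_neg e2]
          exact hc.2 t ht
    · intro t ht
      rcases Nat.lt_or_ge t (j+1) with h | h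
      · have e1 : t ≠ j + 1 := by omega
        simp only [if_neg e1]
        exact hct t (by omega)
      · have e1 : t = j + 1 := by omega
        simp only [if_pos e1]
        rw [e1]

lemma bpath_tdist {j : ℕ} {p : ℕ → V} (hp : IsBPath G q j p) (hj1 : 1 ≤ j)
    (hj2 : j ≤ q-2) {a b : ℕ} (hab : a ≤ b) (hb : b ≤ j) (h0 : 0 < b - a) :
    tdist G.adj (p a) (p b) = (b - a, (q-1) - (b-a)) := by
  have hq := three_le G q hC
  obtain ⟨c, hc, hct⟩ := ext_circ G q hC j hj1 hj2 p hp
  rw [← hct a (by omega), ← hct b (by omega)]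
  exact bcirc_tdist G q hq hc hab (by omega) h0 (by omega)

lemma bpath_walk {j : ℕ} {p : ℕ → V} (hp : IsBPath G q j p) {a b : ℕ}
    (hab : a ≤ b) (hb : b ≤ j) : HasWalk G.adj (p a) (p b) (b - a) := by
  induction b, hab using Nat.le_induction with
  | base => simpa using hasWalk_zero_iff.mpr rfl
  | succ b hab ih =>
    have harc := hp b (by omega)
    have hadj : G.adj (p b) (p (b+1)) := adj_of_ddist_one G.strong (tdist_fst harc)
    have := walk_step (ih (by omega)) hadj
    have he : b - a + 1 = b + 1 - a := by omega
    rwa [he] at this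

lemma exists_Bout (u : V) : ∃ v : V, tdist G.adj u v = (1, q-2) := by
  obtain ⟨x0, y0, hxy⟩ := pnum_attained G hC.1
  have h1 : Set.ncard {z : V | tdist G.adj x0 z = (1, q-2)} ≠ 0 := by
    rw [Ne, Set.ncard_eq_zero (Set.toFinite _), Set.eq_empty_iff_forall_notMem]
    intro hemp
    exact hemp y0 hxy
  have h2 := (kval_eq G ((1:ℕ), q-2) x0).symm.trans (kval_eq G ((1:ℕ), q-2) u)
  rw [h2] at h1
  exact Set.nonempty_of_ncard_ne_zero h1

lemma exists_Bpath (u : V) :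
    ∃ p : ℕ → V, p 0 = u ∧ ∀ t, tdist G.adj (p t) (p (t+1)) = (1, q-2) := by
  have : ∀ w : V, ∃ v : V, tdist G.adj w v = (1, q-2) := exists_Bout G q hC
  choose g hg using this
  refine ⟨fun t => g^[t] u, rfl, ?_⟩
  intro t
  show tdist G.adj (g^[t] u) (g^[t+1] u) = (1, q-2)
  rw [Function.iterate_succ_apply']
  exact hg _

lemma T1a {u v w : V} (huv : tdist G.adj u v = (1, q-2))
    (huw : tdist G.adj u w = (1, q-1)) : tdist G.adj w v = (1, q-1) :=
  thick_out G hC.1 huv huw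

lemma T1b {u v w : V} (huv : tdist G.adj u v = (1, q-2))
    (hwv : tdist G.adj w v = (1, q-1)) : tdist G.adj u w = (1, q-1) :=
  thick_in G hC.1 huv hwv

lemma BP : ∀ m, 1 ≤ m → m ≤ q-2 → ∀ x y : V, tdist G.adj x y = (m, (q-1) - m) →
    ∃ e : ℕ → V, e 0 = x ∧ e m = y ∧ IsBPath G q m e := by
  have hq := three_le G q hC
  intro m hm1
  induction m, hm1 using Nat.le_induction with
  | base =>
    intro _ x y hxy
    have he : q - 1 - 1 = q - 2 := by omega
    rw [he] at hxy
    refine ⟨fun t => if t = 0 then x else y, by simp, by simp, ?_⟩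
    intro t ht
    have h0 : t = 0 := by omega
    subst h0
    simpa using hxy
  | succ m hm1 ih =>
    intro hm2 x y hxy
    -- a witness configuration on a B-path
    obtain ⟨p, hp0, hps⟩ := exists_Bpath G q hC x
    have hpB : IsBPath G q (m+1) p := fun t _ => hps t
    have hw1 : tdist G.adj (p 0) (p (m+1)) = (m+1, (q-1) - (m+1)) := by
      have := bpath_tdist G q hC hpB (by omega) hm2 (by omega : 0 ≤ m+1) le_rfl (by omega)
      simpa using this
    have hw2 : tdist G.adj (p 0) (p 1) = (1, q-2) := hps 0
    have hw3 : tdist G.adj (p 1) (p (m+1)) = (m, (q-1) - m) := by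
      have := bpath_tdist G q hC hpB (by omega) hm2 (by omega : 1 ≤ m+1) le_rfl (by omega)
      have he : m + 1 - 1 = m := by omega
      rwa [he] at this
    have hpn : pnum G.adj (m+1, (q-1)-(m+1)) (1, q-2) (m, (q-1)-m) ≠ 0 :=
      pnum_ne_zero G hw1 hw2 hw3
    obtain ⟨z, hxz, hzy⟩ := pnum_mem G hpn hxy
    obtain ⟨e', he0, hem, heB⟩ := ih (by omega) z y hzy
    refine ⟨fun t => if t = 0 then x else e' (t-1), by simp, ?_, ?_⟩
    · simp only [if_neg (by omega : m + 1 ≠ 0)]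
      have he : m + 1 - 1 = m := by omega
      rw [he, hem]
    · intro t ht
      rcases Nat.eq_zero_or_pos t with h0 | h0
      · subst h0
        simpa [he0] using hxz
      · have e1 : t ≠ 0 := by omega
        have e2 : t + 1 ≠ 0 := by omega
        simp only [if_neg e1, if_neg e2]
        have := heB (t-1) (by omega)
        have he : t - 1 + 1 = t := by omega
        rwa [he] at this

/-- The key lemma: an `A`-arc followed by a `B`-path of length `j`. -/
lemma key {x : V} {j : ℕ} (hj1 : 1 ≤ j) (hj2 : j ≤ q-2) {p : ℕ → V}
    (hp : IsBPath G q j p) (hx : tdist G.adj x (p 0) = (1, q-1)) :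
    tdist G.adj x (p j) = (j+1, (q-1) - j) := by
  have hq := three_le G q hC
  obtain ⟨c, hc, hct⟩ := ext_circ G q hC j hj1 hj2 p hp
  -- the predecessor on the circuit points to x by an A-arc
  have hlast : tdist G.adj (c (q-2)) (p 0) = (1, q-2) := by
    have := hc.2 (q-2) (by omega)
    have he : q - 2 + 1 = q - 1 := by omega
    rw [he, hc.1, hct 0 (by omega)] at this
    exact this
  have hxA : tdist G.adj (c (q-2)) x = (1, q-1) := T1b G q hC hlast hx
  rcases Nat.lt_or_ge j (q-2) with hjlt | hjge
  · -- main case j < q-2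
    have hpj : c j = p j := hct j le_rfl
    -- upper bound forward
    have up1 : ddist G.adj x (p j) ≤ j + 1 := by
      have hadj : G.adj x (p 0) := adj_of_ddist_one G.strong (tdist_fst hx)
      have hw := walk_concat (hasWalk_one_iff.mpr hadj)
        (bpath_walk G q hC hp (by omega : 0 ≤ j) le_rfl)
      have := ddist_le hw
      have he : 1 + (j - 0) = j + 1 := by omega
      rwa [he] at this
    -- backward distance is exactly q-1-j
    have up2 : ddist G.adj (p j) x ≤ (q-1) - j := by
      have hw0 := bcirc_walk G q hq hc (by omega : j ≤ q-2)
      rw [Nat.mod_eq_of_lt (by omega : j < q-1),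
        Nat.mod_eq_of_lt (by omega : q-2 < q-1)] at hw0
      have hadj : G.adj (c (q-2)) x := adj_of_ddist_one G.strong (tdist_fst hxA)
      have hw := walk_step hw0 hadj
      rw [hpj] at hw
      have := ddist_le hw
      have he : q - 2 - j + 1 = q - 1 - j := by omega
      rwa [he] at this
    have low2 : (q-1) - j ≤ ddist G.adj (p j) x := by
      have h0j : tdist G.adj (p 0) (p j) = (j, (q-1) - j) := by
        have := bpath_tdist G q hC hp hj1 hj2 (by omega : 0 ≤ j) le_rfl (by omega)
        simpa using this
      have h1 : ddist G.adj (p 0) x = q - 1 := tdist_snd hx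
      have h2 : ddist G.adj (p 0) (p j) = j := tdist_fst h0j
      have htri := ddist_triangle G.strong (p 0) (p j) x
      omega
    -- lower bound forward
    have low1 : j + 1 ≤ ddist G.adj x (p j) := by
      have hqj : tdist G.adj (c j) (c (q-2)) = (q-2-j, (q-1) - (q-2-j)) :=
        bcirc_tdist G q hq hc (by omega) (by omega) (by omega) (by omega)
      have hback : ddist G.adj (c (q-2)) (c j) = (q-1) - (q-2-j) := tdist_snd hqj
      have h1 : ddist G.adj (c (q-2)) x = 1 := tdist_fst hxA
      have htri := ddist_triangle G.strong (c (q-2)) x (p j)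
      rw [hpj] at hback
      have hge_j : j ≤ ddist G.adj x (p j) := by omega
      rcases Nat.lt_or_ge (ddist G.adj x (p j)) (j+1) with hl | hl
      · exfalso
        -- then ∂(x, p j) = j, so (x, p j) is a B-path pair
        have hdx : ddist G.adj x (p j) = j := by omega
        have hdb : ddist G.adj (p j) x = (q-1) - j := by omega
        have htd : tdist G.adj x (p j) = (j, (q-1) - j) := tdist_ext hdx hdb
        obtain ⟨e, he0, hej, heB⟩ := BP G q hC j hj1 hj2 x (p j) htd
        have he1 : tdist G.adj x (e 1) = (1, q-2) := by
          have := heB 0 (by omega)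
          rwa [he0] at this
        have hz0 : tdist G.adj (p 0) (e 1) = (1, q-1) := T1a G q hC he1 hx
        have hz0' : ddist G.adj (e 1) (p 0) = q - 1 := tdist_snd hz0
        -- but there is a short walk from e 1 to p 0
        have hw1 : HasWalk G.adj (e 1) (e j) (j - 1) :=
          bpath_walk G q hC heB (by omega) le_rfl
        have hjp : ddist G.adj (p j) (p 0) = (q-1) - j := by
          have := bpath_tdist G q hC hp hj1 hj2 (by omega : 0 ≤ j) le_rfl (by omega)
          have h' := tdist_snd this
          simpa using h'
        have hw2 := exists_walk_ddist G.strong (p j) (p 0)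
        rw [hjp] at hw2
        rw [hej] at hw1
        have hw := walk_concat hw1 hw2
        have := ddist_le hw
        omega
      · exact hl
    exact tdist_ext (by omega) (by omega)
  · -- case j = q-2 : then p j = c (q-2) and the answer is A.swap
    have hjq : j = q - 2 := by omega
    have hpj : c (q-2) = p j := by rw [← hjq]; exact hct j le_rfl
    rw [← hpj]
    have : tdist G.adj x (c (q-2)) = (q-1, 1) := by
      have h1 : ddist G.adj (c (q-2)) x = 1 := tdist_fst hxA
      have h2 : ddist G.adj x (c (q-2)) = q - 1 := tdist_snd hxA
      exact tdist_ext h2 h1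
    rw [this]
    have e1 : j + 1 = q - 1 := by omega
    have e2 : q - 1 - j = 1 := by omega
    rw [e1, e2]

end Aux
end Aux4
section Aux5
variable {V : Type*} [Fintype V] (G : CTWDR V) (q : ℕ)

set_option linter.unusedSectionVars false
set_option maxHeartbeats 1000000

namespace Aux

variable (hC : G.Cexists q)
include hC

lemma prodBB {m : ℕ} (hm1 : 1 ≤ m) (hm2 : m + 1 ≤ q-2) :
    G.prodS {((m:ℕ), (q-1)-m)} {((1:ℕ), q-2)} = {(m+1, (q-1)-(m+1))} := by
  have hq := three_le G q hC
  ext h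
  simp only [CTWDR.prodS, Set.mem_setOf_eq, Set.mem_singleton_iff]
  constructor
  · rintro ⟨i', hi', j', hj', hpn⟩
    subst hi'; subst hj'
    obtain ⟨x, y, hxy⟩ := pnum_attained G hpn
    obtain ⟨z, hxz, hzy⟩ := pnum_mem G hpn hxy
    obtain ⟨e, he0, hem, heB⟩ := BP G q hC m hm1 (by omega) x z hxz
    set e' : ℕ → V := fun t => if t = m+1 then y else e t with he'def
    have he'B : IsBPath G q (m+1) e' := by
      intro t ht
      rcases Nat.lt_or_ge t m with h' | h'
      · have e1 : t ≠ m + 1 := by omega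
        have e2 : t + 1 ≠ m + 1 := by omega
        simp only [he'def, if_neg e1, if_neg e2]
        exact heB t h'
      · have e1 : t = m := by omega
        subst e1
        have e2 : t ≠ t + 1 := by omega
        simp only [he'def, if_neg e2, if_pos rfl]
        rw [hem]
        exact hzy
    have := bpath_tdist G q hC he'B (by omega) hm2 (by omega : 0 ≤ m+1) le_rfl (by omega)
    have hev0 : e' 0 = x := by
      simp only [he'def, if_neg (by omega : (0:ℕ) ≠ m+1)]
      exact he0
    have hevm : e' (m+1) = y := by simp [he'def]
    rw [hev0, hevm, hxy] at this
    simpa using this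
  · rintro rfl
    obtain ⟨x0, y0, hx0⟩ := pnum_attained G hC.1
    obtain ⟨p, hp0, hps⟩ := exists_Bpath G q hC x0
    have hpB : IsBPath G q (m+1) p := fun t _ => hps t
    have h1 : tdist G.adj (p 0) (p (m+1)) = (m+1, (q-1)-(m+1)) := by
      have := bpath_tdist G q hC hpB (by omega) hm2 (by omega : 0 ≤ m+1) le_rfl (by omega)
      simpa using this
    have h2 : tdist G.adj (p 0) (p m) = (m, (q-1)-m) := by
      have := bpath_tdist G q hC hpB (by omega) hm2 (by omega : 0 ≤ m)
        (by omega : m ≤ m+1) (by omega)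
      simpa using this
    have h3 : tdist G.adj (p m) (p (m+1)) = (1, q-2) := hps m
    exact ⟨_, rfl, _, rfl, pnum_ne_zero G h1 h2 h3⟩

lemma powB : ∀ m, 1 ≤ m → m ≤ q-2 →
    G.pow ((1:ℕ), q-2) m = {((m:ℕ), (q-1)-m)} := by
  have hq := three_le G q hC
  intro m hm1
  induction m, hm1 using Nat.le_induction with
  | base =>
    intro _
    have he : q - 1 - 1 = q - 2 := by omega
    rw [he]
    rfl
  | succ m hm1 ih =>
    intro hm2
    have hstep : G.pow ((1:ℕ), q-2) (m+1) =
        G.prodS (G.pow ((1:ℕ), q-2) m) {((1:ℕ), q-2)} := by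
      have hm : m + 1 = (m - 1) + 2 := by omega
      rw [hm]
      show CTWDR.pow G _ ((m-1)+2) = _
      rw [CTWDR.pow]
      have e : m - 1 + 1 = m := by omega
      rw [e]
    rw [hstep, ih (by omega)]
    exact prodBB G q hC hm1 hm2

lemma prodA0 : G.prodS {((1:ℕ), q-1)} {((0:ℕ), (0:ℕ))} = {((1:ℕ), q-1)} := by
  ext h
  simp only [CTWDR.prodS, Set.mem_setOf_eq, Set.mem_singleton_iff]
  constructor
  · rintro ⟨i', hi', j', hj', hpn⟩
    subst hi'; subst hj'
    obtain ⟨x, y, hxy⟩ := pnum_attained G hpn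
    obtain ⟨z, hxz, hzy⟩ := pnum_mem G hpn hxy
    have hzy0 : z = y := (ddist_eq_zero_iff G.strong).mp (tdist_fst hzy)
    rw [← hxy, ← hzy0]
    exact hxz
  · rintro rfl
    obtain ⟨x0, y0, hx0⟩ := pnum_attained G hC.1
    obtain ⟨z, hxz, hzy⟩ := pnum_mem G hC.1 hx0
    exact ⟨_, rfl, _, rfl, pnum_ne_zero G hxz hxz (tdist_self G z)⟩

lemma prodAj {j : ℕ} (hj1 : 1 ≤ j) (hj2 : j ≤ q-2) :
    G.prodS {((1:ℕ), q-1)} {((j:ℕ), (q-1)-j)} = {(j+1, (q-1)-j)} := by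
  ext h
  simp only [CTWDR.prodS, Set.mem_setOf_eq, Set.mem_singleton_iff]
  constructor
  · rintro ⟨i', hi', j', hj', hpn⟩
    subst hi'; subst hj'
    obtain ⟨x, y, hxy⟩ := pnum_attained G hpn
    obtain ⟨z, hxz, hzy⟩ := pnum_mem G hpn hxy
    obtain ⟨e, he0, hej, heB⟩ := BP G q hC j hj1 hj2 z y hzy
    have hx : tdist G.adj x (e 0) = (1, q-1) := by rw [he0]; exact hxz
    have := key G q hC hj1 hj2 heB hx
    rw [hej, hxy] at this
    exact this
  · rintro rfl
    obtain ⟨x0, y0, hx0⟩ := pnum_attained G hC.1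
    obtain ⟨z, hxz, hzy⟩ := pnum_mem G hC.1 hx0
    obtain ⟨p, hp0, hps⟩ := exists_Bpath G q hC z
    have hpB : IsBPath G q j p := fun t _ => hps t
    have hx : tdist G.adj x0 (p 0) = (1, q-1) := by rw [hp0]; exact hxz
    have h1 : tdist G.adj x0 (p j) = (j+1, (q-1)-j) := key G q hC hj1 hj2 hpB hx
    have h2 : tdist G.adj (p 0) (p j) = (j, (q-1)-j) := by
      have := bpath_tdist G q hC hpB hj1 hj2 (by omega : 0 ≤ j) le_rfl (by omega)
      simpa using this
    rw [← hp0] at hxz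
    exact ⟨_, rfl, _, rfl, pnum_ne_zero G h1 hxz h2⟩

end Aux
end Aux5
/-- Lemma 2.5(i): if `C(q)` exists, then
`Γ_{1,q-1} Γ_{1,q-2}^{i-1} = {Γ_{i,q-i}}` for `1 ≤ i ≤ q-1`. -/
theorem stmt4 {V : Type*} [Fintype V] (G : CTWDR V) (q : ℕ) (hC : G.Cexists q) :
    ∀ i, 1 ≤ i → i ≤ q - 1 →
      G.prodS {(1, q - 1)} (G.pow (1, q - 2) (i - 1)) = {(i, q - i)} := by
  intro i hi1 hi2
  have hq := Aux.three_le G q hC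
  rcases Nat.lt_or_ge i 2 with hi | hi
  · have : i = 1 := by omega
    subst this
    have h0 : G.pow ((1:ℕ), q - 2) 0 = {((0:ℕ), (0:ℕ))} := rfl
    rw [h0, Aux.prodA0 G q hC]
  · have hj1 : 1 ≤ i - 1 := by omega
    have hj2 : i - 1 ≤ q - 2 := by omega
    rw [Aux.powB G q hC (i-1) hj1 hj2, Aux.prodAj G q hC hj1 hj2]
    have e1 : i - 1 + 1 = i := by omega
    have e2 : q - 1 - (i - 1) = q - i := by omega
    rw [e1, e2]
end

section
/- Let Γ be a commutative thick weakly distance-regular digraph in which C(q) exists. Then Γ_{1,q-1}^2 = {Γ_{1,q-2}} or Γ_{1,q-1}^2 = {Γ_{1,q-2}, Γ_{2,q-1}}. -/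
/-!
Common framework: commutative thick weakly distance-regular digraphs.
-/

variable {V : Type*}

/-! ### Auxiliary lemmas -/

section WalkLemmas

variable {V : Type*} {adj : V → V → Prop}

lemma hasWalk_zero {x y : V} : HasWalk adj x y 0 ↔ x = y := by
  constructor
  · rintro ⟨f, h0, hn, -⟩
    rw [← h0, hn]
  · rintro rfl
    exact ⟨fun _ => x, rfl, rfl, fun i hi => absurd hi (by omega)⟩

lemma hasWalk_one {x y : V} : HasWalk adj x y 1 ↔ adj x y := by
  constructor
  · rintro ⟨f, h0, hn, ha⟩
    have := ha 0 (by omega)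
    rwa [h0, hn] at this
  · intro h
    refine ⟨fun t => if t = 0 then x else y, by simp, by simp, ?_⟩
    intro i hi
    have : i = 0 := by omega
    subst this
    simpa using h

lemma HasWalk.comp {x y z : V} {m k : ℕ} (h1 : HasWalk adj x y m)
    (h2 : HasWalk adj y z k) : HasWalk adj x z (m + k) := by
  obtain ⟨f, hf0, hfm, hfa⟩ := h1
  obtain ⟨g, hg0, hgk, hga⟩ := h2
  refine ⟨fun t => if t < m then f t else g (t - m), ?_, ?_, ?_⟩
  · by_cases hm : 0 < m
    · simpa [hm] using hf0
    · have hm0 : m = 0 := by omega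
      subst hm0
      simp only [Nat.not_lt_zero, if_false, Nat.sub_zero]
      rw [hg0, ← hfm, hf0]
  · have : ¬ (m + k < m) := by omega
    dsimp only
    rw [if_neg this]
    simpa using hgk
  · intro t ht
    dsimp only
    by_cases h1 : t + 1 < m
    · have h2 : t < m := by omega
      rw [if_pos h2, if_pos h1]
      exact hfa t (by omega)
    · by_cases h3 : t < m
      · rw [if_pos h3, if_neg h1]
        have h4 : t + 1 - m = 0 := by omega
        rw [h4, hg0, ← hfm]
        have h5 : m = t + 1 := by omega
        rw [h5]
        exact hfa t (by omega)
      · rw [if_neg h3, if_neg h1]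
        have h5 : t + 1 - m = (t - m) + 1 := by omega
        rw [h5]
        exact hga (t - m) (by omega)

lemma ddist_le {x y : V} {n : ℕ} (h : HasWalk adj x y n) : ddist adj x y ≤ n :=
  Nat.sInf_le h

lemma ddist_self (x : V) : ddist adj x x = 0 :=
  Nat.le_zero.mp (ddist_le (hasWalk_zero.mpr rfl))

variable (hs : IsStrong adj)
include hs

lemma exists_walk_ddist (x y : V) : HasWalk adj x y (ddist adj x y) :=
  Nat.sInf_mem (hs x y)

lemma ddist_eq_zero_iff {x y : V} : ddist adj x y = 0 ↔ x = y :=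
  ⟨fun h => hasWalk_zero.mp (h ▸ exists_walk_ddist hs x y), fun h => h ▸ ddist_self x⟩

lemma ddist_triangle (x y z : V) : ddist adj x z ≤ ddist adj x y + ddist adj y z :=
  ddist_le ((exists_walk_ddist hs x y).comp (exists_walk_ddist hs y z))

lemma adj_of_ddist_eq_one {x y : V} (h : ddist adj x y = 1) : adj x y :=
  hasWalk_one.mp (h ▸ exists_walk_ddist hs x y)

end WalkLemmas

section TDistLemmas

variable {V : Type*} {adj : V → V → Prop}

lemma tdist_eq_iff {x y : V} {a b : ℕ} :
    tdist adj x y = (a, b) ↔ ddist adj x y = a ∧ ddist adj y x = b := by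
  simp [tdist, Prod.ext_iff]

lemma tdist_swap (x y : V) : tdist adj y x = (tdist adj x y).swap := rfl

lemma tdist_self (x : V) : tdist adj x x = (0, 0) := by
  simp [tdist, ddist_self]

end TDistLemmas

section Counting

variable {V : Type*} [Fintype V] (G : CTWDR V)

omit [Fintype V] in
lemma tdist_swap_iff {adj : V → V → Prop} {x y : V} {r : ℕ × ℕ} :
    tdist adj x y = r.swap ↔ tdist adj y x = r := by
  constructor
  · intro h
    rw [tdist_swap x y, h, Prod.swap_swap]
  · intro h
    rw [tdist_swap y x, h]

lemma pnum_eq_ncard {h i j : ℕ × ℕ} {x y : V} (hxy : tdist G.adj x y = h) :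
    pnum G.adj h i j = Set.ncard {z : V | tdist G.adj x z = i ∧ tdist G.adj z y = j} := by
  have hset : {n | ∃ x' y' : V, tdist G.adj x' y' = h ∧
      n = Set.ncard {z : V | tdist G.adj x' z = i ∧ tdist G.adj z y' = j}}
      = {Set.ncard {z : V | tdist G.adj x z = i ∧ tdist G.adj z y = j}} := by
    ext n
    simp only [Set.mem_setOf_eq, Set.mem_singleton_iff]
    constructor
    · rintro ⟨x', y', hxy', rfl⟩
      exact G.wdr i j x' y' x y (hxy'.trans hxy.symm)
    · rintro rfl
      exact ⟨x, y, hxy, rfl⟩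
  rw [pnum, hset, csSup_singleton]

lemma attained_of_pnum_ne_zero {h i j : ℕ × ℕ} (hp : pnum G.adj h i j ≠ 0) :
    ∃ x y : V, tdist G.adj x y = h := by
  by_contra hno
  push_neg at hno
  apply hp
  rw [pnum]
  have hempty : {n | ∃ x y : V, tdist G.adj x y = h ∧
      n = Set.ncard {z : V | tdist G.adj x z = i ∧ tdist G.adj z y = j}} = ∅ := by
    ext n
    simp only [Set.mem_setOf_eq, Set.mem_empty_iff_false, iff_false, not_exists]
    intro x y hxy
    exact absurd hxy.1 (hno x y)
  rw [hempty]
  simpa using csSup_empty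

lemma exists_witness {h i j : ℕ × ℕ} (hp : pnum G.adj h i j ≠ 0) {x y : V}
    (hxy : tdist G.adj x y = h) :
    ∃ z : V, tdist G.adj x z = i ∧ tdist G.adj z y = j := by
  rw [pnum_eq_ncard G hxy] at hp
  exact Set.nonempty_of_ncard_ne_zero hp

lemma kval_eq_ncard (i : ℕ × ℕ) (x : V) :
    kval G.adj i = Set.ncard {z : V | tdist G.adj x z = i} := by
  rw [kval, pnum_eq_ncard G (tdist_self x)]
  congr 1
  ext z
  simp only [Set.mem_setOf_eq]
  constructor
  · rintro ⟨h1, -⟩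
    exact h1
  · intro h1
    exact ⟨h1, tdist_swap_iff.mpr h1⟩

lemma exists_of_attained {r : ℕ × ℕ} (ha : ∃ u w : V, tdist G.adj u w = r) (v : V) :
    ∃ z : V, tdist G.adj v z = r := by
  obtain ⟨u, w, huw⟩ := ha
  have h1 : Set.ncard {z : V | tdist G.adj u z = r} ≠ 0 :=
    ((Set.ncard_pos (Set.toFinite _)).mpr ⟨w, huw⟩).ne'
  have h2 : Set.ncard {z : V | tdist G.adj v z = r} ≠ 0 := by
    rw [← kval_eq_ncard G r v]
    rw [← kval_eq_ncard G r u] at h1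
    exact h1
  exact Set.nonempty_of_ncard_ne_zero h2

lemma full_out (h i : ℕ × ℕ) (hp : pnum G.adj h i i ≠ 0) {x y : V}
    (hxy : tdist G.adj x y = h) :
    {z : V | tdist G.adj x z = i ∧ tdist G.adj z y = i} = {z : V | tdist G.adj x z = i} := by
  have hk : pnum G.adj h i i = kval G.adj i := ((G.thick h i).1).resolve_left hp
  refine Set.eq_of_subset_of_ncard_le (fun z hz => hz.1) ?_ (Set.toFinite _)
  rw [← pnum_eq_ncard G hxy, hk, kval_eq_ncard G i x]

lemma full_out_mem (h i : ℕ × ℕ) (hp : pnum G.adj h i i ≠ 0) {x y z : V}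
    (hxy : tdist G.adj x y = h) (hz : tdist G.adj x z = i) : tdist G.adj z y = i := by
  have hset := full_out G h i hp hxy
  have hzz : z ∈ {z : V | tdist G.adj x z = i} := hz
  rw [← hset] at hzz
  exact hzz.2

lemma pnum_swap_ne_zero (h i : ℕ × ℕ) (hp : pnum G.adj h i i ≠ 0) :
    pnum G.adj h.swap i.swap i.swap ≠ 0 := by
  obtain ⟨x, y, hxy⟩ := attained_of_pnum_ne_zero G hp
  obtain ⟨z, hz1, hz2⟩ := exists_witness G hp hxy
  have hyx : tdist G.adj y x = h.swap := by rw [tdist_swap, hxy]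
  rw [pnum_eq_ncard G (i := i.swap) (j := i.swap) hyx]
  have hz : z ∈ {w : V | tdist G.adj y w = i.swap ∧ tdist G.adj w x = i.swap} :=
    ⟨tdist_swap_iff.mpr hz2, tdist_swap_iff.mpr hz1⟩
  exact ((Set.ncard_pos (Set.toFinite _)).mpr ⟨z, hz⟩).ne'

lemma full_in_mem (h i : ℕ × ℕ) (hp : pnum G.adj h i i ≠ 0) {x y z : V}
    (hxy : tdist G.adj x y = h) (hz : tdist G.adj z y = i) : tdist G.adj x z = i := by
  have hp2 := pnum_swap_ne_zero G h i hp
  have hyx : tdist G.adj y x = h.swap := by rw [tdist_swap, hxy]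
  have hz' : tdist G.adj y z = i.swap := tdist_swap_iff.mpr hz
  have := full_out_mem G h.swap i.swap hp2 hyx hz'
  exact tdist_swap_iff.mp this

/-- P3 : for a pair of type `h` with `p^h_{ii} ≠ 0`, the `i`-out-neighbourhood of `x`
equals the `i`-in-neighbourhood of `y`. -/
lemma out_eq_in (h i : ℕ × ℕ) (hp : pnum G.adj h i i ≠ 0) {x y : V}
    (hxy : tdist G.adj x y = h) :
    {z : V | tdist G.adj x z = i} = {z : V | tdist G.adj z y = i} := by
  ext z
  simp only [Set.mem_setOf_eq]
  exact ⟨fun hz => full_out_mem G h i hp hxy hz, fun hz => full_in_mem G h i hp hxy hz⟩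

/-- P5 : two vertices with a common `i`-in-neighbour have the same `i`-out-neighbourhood. -/
lemma same_out_of_common_in (i : ℕ × ℕ) {t z z' : V}
    (h1 : tdist G.adj t z = i) (h2 : tdist G.adj t z' = i) :
    {w : V | tdist G.adj z w = i} = {w : V | tdist G.adj z' w = i} := by
  have key : ∀ a b d : V, tdist G.adj t a = i → tdist G.adj t b = i →
      tdist G.adj a d = i → tdist G.adj b d = i := by
    intro a b d ha hb hd
    have hpd : pnum G.adj (tdist G.adj t d) i i ≠ 0 := by
      rw [pnum_eq_ncard G (x := t) (y := d) rfl]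
      have hmem : a ∈ {z : V | tdist G.adj t z = i ∧ tdist G.adj z d = i} := ⟨ha, hd⟩
      exact ((Set.ncard_pos (Set.toFinite _)).mpr ⟨a, hmem⟩).ne'
    exact full_out_mem G _ i hpd rfl hb
  ext w
  simp only [Set.mem_setOf_eq]
  exact ⟨key z z' w h1 h2, key z' z w h2 h1⟩

/-- P6 : same `i`-out-neighbourhood implies same `i`-in-neighbourhood. -/
lemma same_in_of_same_out (i : ℕ × ℕ) (hiatt : ∃ u w : V, tdist G.adj u w = i) {a b : V}
    (hab : {w : V | tdist G.adj a w = i} = {w : V | tdist G.adj b w = i}) :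
    {w : V | tdist G.adj w a = i} = {w : V | tdist G.adj w b = i} := by
  have key : ∀ a b : V, {w : V | tdist G.adj a w = i} = {w : V | tdist G.adj b w = i} →
      ∀ t, tdist G.adj t a = i → tdist G.adj t b = i := by
    intro a b hab t hta
    obtain ⟨d, hd⟩ := exists_of_attained G hiatt a
    have hpd : pnum G.adj (tdist G.adj t d) i i ≠ 0 := by
      rw [pnum_eq_ncard G (x := t) (y := d) rfl]
      have hmem : a ∈ {z : V | tdist G.adj t z = i ∧ tdist G.adj z d = i} := ⟨hta, hd⟩
      exact ((Set.ncard_pos (Set.toFinite _)).mpr ⟨a, hmem⟩).ne'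
    have hbd : tdist G.adj b d = i := by
      have : d ∈ {w : V | tdist G.adj a w = i} := hd
      rw [hab] at this
      exact this
    exact full_in_mem G _ i hpd rfl hbd
  ext t
  simp only [Set.mem_setOf_eq]
  exact ⟨key a b hab t, key b a hab.symm t⟩

/-- L-shift : moving two `i`-steps forward across a relation `g` with `p^g_{ii} ≠ 0`. -/
lemma np_shift (i g : ℕ × ℕ) (hg : pnum G.adj g i i ≠ 0) {a b p p' p'' : V}
    (hab : tdist G.adj a b = g)
    (hNp : {w : V | tdist G.adj a w = i} = {w : V | tdist G.adj p w = i})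
    (h1 : tdist G.adj p p' = i) (h2 : tdist G.adj p' p'' = i) :
    {w : V | tdist G.adj b w = i} = {w : V | tdist G.adj p'' w = i} := by
  have hap' : tdist G.adj a p' = i := by
    have : p' ∈ {w : V | tdist G.adj p w = i} := h1
    rw [← hNp] at this
    exact this
  have hp'b : tdist G.adj p' b = i := full_out_mem G g i hg hab hap'
  exact same_out_of_common_in G i hp'b h2

/-- L-step : same out-neighbourhoods propagate along `i`-steps. -/
lemma np_step (i : ℕ × ℕ) {a b a' b' : V}
    (hNp : {w : V | tdist G.adj a w = i} = {w : V | tdist G.adj b w = i})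
    (h1 : tdist G.adj a a' = i) (h2 : tdist G.adj b b' = i) :
    {w : V | tdist G.adj a' w = i} = {w : V | tdist G.adj b' w = i} := by
  have hab' : tdist G.adj a b' = i := by
    have : b' ∈ {w : V | tdist G.adj b w = i} := h2
    rw [← hNp] at this
    exact this
  exact same_out_of_common_in G i h1 hab'

end Counting

section Main

variable {V : Type*} [Fintype V] (G : CTWDR V) (n : ℕ)

lemma adj_of_tdist {x y : V} {c : ℕ} (h : tdist G.adj x y = (1, c)) : G.adj x y :=
  adj_of_ddist_eq_one G.strong (tdist_eq_iff.mp h).1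

/-- Every vertex lies on a circuit of length `n+1` all of whose arcs have type `(1,n)`. -/
lemma exists_e_circuit (hn : 1 ≤ n) (e_att : ∃ u w : V, tdist G.adj u w = (1, n))
    (hPure : G.Pure (n + 1)) (v : V) :
    ∃ c : ℕ → V, c 0 = v ∧ c (n + 1) = v ∧
      ∀ j < n + 1, tdist G.adj (c j) (c (j + 1)) = (1, n) := by
  obtain ⟨v₁, hv₁⟩ := exists_of_attained G e_att v
  have hd1 := tdist_eq_iff.mp hv₁
  have hwalk : HasWalk G.adj v₁ v n := hd1.2 ▸ exists_walk_ddist G.strong v₁ v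
  obtain ⟨g, hg0, hgn, hga⟩ := hwalk
  set f : ℕ → V := fun t => if t = 0 then v else g (t - 1) with hf
  have hf0 : f 0 = v := by simp [hf]
  have hfsucc : ∀ t, f (t + 1) = g t := by intro t; simp [hf]
  have hfn1 : f (n + 1) = v := by rw [hfsucc n, hgn]
  have hcirc : IsCircuit G.adj (n + 1) f := by
    refine ⟨by omega, by rw [hfn1, hf0], ?_⟩
    intro t ht
    rcases Nat.eq_zero_or_pos t with rfl | htpos
    · rw [hf0, hfsucc 0, hg0]
      exact adj_of_ddist_eq_one G.strong hd1.1
    · obtain ⟨t', rfl⟩ : ∃ t', t = t' + 1 := ⟨t - 1, by omega⟩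
      rw [hfsucc t', hfsucc (t' + 1)]
      exact hga t' (by omega)
  have harc0 : tdist G.adj (f 0) (f 1) = (1, (n + 1) - 1) := by
    rw [hf0, hfsucc 0, hg0]
    simpa using hv₁
  have hall := hPure f hcirc ⟨0, by omega, harc0⟩
  refine ⟨f, hf0, hfn1, ?_⟩
  intro j hj
  have := hall j hj
  simpa using this

/-- F-c : for any `h`-pair with `p^h_{ii} ≠ 0` (where `i = (1,n+1)`), we have
`∂(y,x) ≤ n+1`. -/
lemma ddist_back_le (hn : 1 ≤ n)
    (hCp : pnum G.adj (1, n) (1, n + 1) (1, n + 1) ≠ 0)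
    (hPure : G.Pure (n + 1)) {h : ℕ × ℕ}
    (hh : pnum G.adj h (1, n + 1) (1, n + 1) ≠ 0) {x y : V}
    (hxy : tdist G.adj x y = h) : ddist G.adj y x ≤ n + 1 := by
  classical
  -- attainedness facts
  have e_att : ∃ u w : V, tdist G.adj u w = (1, n) := attained_of_pnum_ne_zero G hCp
  obtain ⟨x₀, y₀, hx0y0⟩ := e_att
  obtain ⟨z₀, hz01, hz02⟩ := exists_witness G hCp hx0y0
  have e_att : ∃ u w : V, tdist G.adj u w = (1, n) := ⟨x₀, y₀, hx0y0⟩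
  have i_att : ∃ u w : V, tdist G.adj u w = (1, n + 1) := ⟨x₀, z₀, hz01⟩
  have eswap_att : ∃ u w : V, tdist G.adj u w = ((1 : ℕ), n).swap :=
    ⟨y₀, x₀, tdist_swap_iff.mpr hx0y0⟩
  have iswap_att : ∃ u w : V, tdist G.adj u w = ((1 : ℕ), n + 1).swap :=
    ⟨z₀, x₀, tdist_swap_iff.mpr hz01⟩
  have ein : ∀ v : V, ∃ z : V, tdist G.adj z v = (1, n) := by
    intro v
    obtain ⟨z, hz⟩ := exists_of_attained G eswap_att v
    exact ⟨z, tdist_swap_iff.mp hz⟩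
  have iin : ∀ v : V, ∃ z : V, tdist G.adj z v = (1, n + 1) := by
    intro v
    obtain ⟨z, hz⟩ := exists_of_attained G iswap_att v
    exact ⟨z, tdist_swap_iff.mp hz⟩
  -- backward e-chain from x
  let w : ℕ → V := fun j => Nat.rec x (fun _ prev => Classical.choose (ein prev)) j
  have hw0 : w 0 = x := rfl
  have hwe : ∀ j, tdist G.adj (w (j + 1)) (w j) = (1, n) := fun j =>
    Classical.choose_spec (ein (w j))
  -- all-e circuit through y
  obtain ⟨c, hc0, hcn1, hcarc⟩ := exists_e_circuit G n hn e_att hPure y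
  -- the K-induction : out-sets along the two chains match up
  have K : ∀ m, m ≤ n →
      {z : V | tdist G.adj (w m) z = (1, n + 1)} =
      {z : V | tdist G.adj (c (n - m)) z = (1, n + 1)} := by
    intro m
    induction m with
    | zero =>
      intro _
      have h1 : {z : V | tdist G.adj (w 0) z = (1, n + 1)} =
          {z : V | tdist G.adj z y = (1, n + 1)} := by
        rw [hw0]; exact out_eq_in G h (1, n + 1) hh hxy
      have h2 : {z : V | tdist G.adj (c n) z = (1, n + 1)} =
          {z : V | tdist G.adj z y = (1, n + 1)} := by
        have harc : tdist G.adj (c n) (c (n + 1)) = (1, n) := hcarc n (by omega)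
        have := out_eq_in G (1, n) (1, n + 1) hCp harc
        rwa [hcn1] at this
      rw [Nat.sub_zero, h1, h2]
    | succ m ih =>
      intro hm1
      have hm : m ≤ n := by omega
      have h1 : {z : V | tdist G.adj (w (m + 1)) z = (1, n + 1)} =
          {z : V | tdist G.adj z (w m) = (1, n + 1)} :=
        out_eq_in G (1, n) (1, n + 1) hCp (hwe m)
      have h2 : {z : V | tdist G.adj z (w m) = (1, n + 1)} =
          {z : V | tdist G.adj z (c (n - m)) = (1, n + 1)} :=
        same_in_of_same_out G (1, n + 1) i_att (ih hm)
      have hidx : (n - m - 1) + 1 = n - m := by omega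
      have harc : tdist G.adj (c (n - m - 1)) (c (n - m)) = (1, n) := by
        have := hcarc (n - m - 1) (by omega)
        rwa [hidx] at this
      have h3 : {z : V | tdist G.adj (c (n - m - 1)) z = (1, n + 1)} =
          {z : V | tdist G.adj z (c (n - m)) = (1, n + 1)} :=
        out_eq_in G (1, n) (1, n + 1) hCp harc
      have hidx2 : n - (m + 1) = n - m - 1 := by omega
      rw [hidx2, h1, h2, ← h3]
  -- extract the final two-step connection
  have hfin : {z : V | tdist G.adj z (w (n - 1)) = (1, n + 1)} =
      {z : V | tdist G.adj y z = (1, n + 1)} := by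
    have harc : tdist G.adj (w n) (w (n - 1)) = (1, n) := by
      have := hwe (n - 1)
      rwa [show (n - 1) + 1 = n by omega] at this
    have h1 : {z : V | tdist G.adj (w n) z = (1, n + 1)} =
        {z : V | tdist G.adj z (w (n - 1)) = (1, n + 1)} :=
      out_eq_in G (1, n) (1, n + 1) hCp harc
    have h2 := K n le_rfl
    rw [Nat.sub_self, hc0] at h2
    rw [← h1, h2]
  obtain ⟨t, ht⟩ := iin (w (n - 1))
  have hyt : tdist G.adj y t = (1, n + 1) := by
    have : t ∈ {z : V | tdist G.adj z (w (n - 1)) = (1, n + 1)} := ht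
    rw [hfin] at this
    exact this
  -- build the walk y → t → w (n-1) → ... → w 0 = x
  have hchain : ∀ j, HasWalk G.adj (w j) x j := by
    intro j
    induction j with
    | zero => exact hasWalk_zero.mpr hw0
    | succ j ih =>
      have harc : G.adj (w (j + 1)) (w j) := adj_of_tdist G (hwe j)
      have := (hasWalk_one.mpr harc).comp ih
      simpa [Nat.add_comm] using this
  have hwalk : HasWalk G.adj y x (1 + (1 + (n - 1))) :=
    (hasWalk_one.mpr (adj_of_tdist G hyt)).comp
      ((hasWalk_one.mpr (adj_of_tdist G ht)).comp (hchain (n - 1)))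
  have := ddist_le hwalk
  have harith : 1 + (1 + (n - 1)) = n + 1 := by omega
  rwa [harith] at this

end Main

section Exclusion

variable {V : Type*} [Fintype V] (G : CTWDR V) (n : ℕ)

/-- F-e : the type `(2,n)` cannot occur in `Γ_{1,n+1}^2`. -/
lemma no_two_n (hn : 1 ≤ n)
    (hCp : pnum G.adj (1, n) (1, n + 1) (1, n + 1) ≠ 0)
    (hPure : G.Pure (n + 1))
    (hh : pnum G.adj (2, n) (1, n + 1) (1, n + 1) ≠ 0) : False := by
  classical
  obtain ⟨x, y, hxy⟩ := attained_of_pnum_ne_zero G hh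
  have e_att : ∃ u w : V, tdist G.adj u w = (1, n) := attained_of_pnum_ne_zero G hCp
  -- initial geodesic y → x of length n
  have hdyx : ddist G.adj y x = n := (tdist_eq_iff.mp hxy).2
  have hwyx : HasWalk G.adj y x n := hdyx ▸ exists_walk_ddist G.strong y x
  obtain ⟨a, ha0, han, haarc⟩ := hwyx
  -- window sequence
  let pick : V → V → V := fun X Y =>
    if hp : ∃ Z, tdist G.adj X Z = (1, n + 1) ∧ tdist G.adj Z Y = (1, n + 1) then
      hp.choose else X
  let W : ℕ → ℕ → V := fun m =>
    Nat.rec a (fun _ prev => fun t => if t < n then prev (t + 1) else pick (prev n) (prev 0)) m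
  have hW0 : ∀ t, W 0 t = a t := fun t => rfl
  have hWsucc : ∀ m t, W (m + 1) t = if t < n then W m (t + 1) else pick (W m n) (W m 0) :=
    fun m t => rfl
  -- invariant
  have hINV : ∀ m, (∀ t < n, G.adj (W m t) (W m (t + 1))) ∧
      tdist G.adj (W m n) (W m 0) = (2, n) := by
    intro m
    induction m with
    | zero =>
      refine ⟨fun t ht => haarc t ht, ?_⟩
      rw [hW0 n, hW0 0, han, ha0]
      exact hxy
    | succ m ih =>
      obtain ⟨harc, hXY⟩ := ih
      have hpex : ∃ Z, tdist G.adj (W m n) Z = (1, n + 1) ∧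
          tdist G.adj Z (W m 0) = (1, n + 1) := exists_witness G hh hXY
      have hpick : pick (W m n) (W m 0) = hpex.choose := dif_pos hpex
      have hZ1 : tdist G.adj (W m n) (pick (W m n) (W m 0)) = (1, n + 1) := by
        rw [hpick]; exact hpex.choose_spec.1
      have hZ2 : tdist G.adj (pick (W m n) (W m 0)) (W m 0) = (1, n + 1) := by
        rw [hpick]; exact hpex.choose_spec.2
      set Z := pick (W m n) (W m 0) with hZdef
      -- distances
      have dXY : ddist G.adj (W m n) (W m 0) = 2 := (tdist_eq_iff.mp hXY).1
      have dYX : ddist G.adj (W m 0) (W m n) = n := (tdist_eq_iff.mp hXY).2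
      have dXZ : ddist G.adj (W m n) Z = 1 := (tdist_eq_iff.mp hZ1).1
      have dZX : ddist G.adj Z (W m n) = n + 1 := (tdist_eq_iff.mp hZ1).2
      have dZY : ddist G.adj Z (W m 0) = 1 := (tdist_eq_iff.mp hZ2).1
      have dYZ : ddist G.adj (W m 0) Z = n + 1 := (tdist_eq_iff.mp hZ2).2
      -- walk from W m t to W m n
      have hwalkto : ∀ j t, t + j = n → HasWalk G.adj (W m t) (W m n) j := by
        intro j
        induction j with
        | zero => intro t ht; rw [show t = n by omega]; exact hasWalk_zero.mpr rfl
        | succ j ihj =>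
          intro t ht
          have h1 : G.adj (W m t) (W m (t + 1)) := harc t (by omega)
          have := (hasWalk_one.mpr h1).comp (ihj (t + 1) (by omega))
          simpa [Nat.add_comm] using this
      have dYB : ddist G.adj (W m 0) (W m 1) ≤ 1 :=
        ddist_le (hasWalk_one.mpr (harc 0 (by omega)))
      have dBX : ddist G.adj (W m 1) (W m n) ≤ n - 1 :=
        ddist_le (hwalkto (n - 1) 1 (by omega))
      have tri1 := ddist_triangle G.strong (W m 0) (W m 1) Z
      have tri2 := ddist_triangle G.strong (W m 1) (W m n) Z
      have tri3 := ddist_triangle G.strong Z (W m 0) (W m 1)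
      have tri4 := ddist_triangle G.strong Z (W m 1) (W m n)
      -- d (W m 1) Z = n
      have dBZ : ddist G.adj (W m 1) Z = n := by
        have hub : ddist G.adj (W m 1) Z ≤ n := by omega
        have hlb : n ≤ ddist G.adj (W m 1) Z := by omega
        omega
      -- d Z (W m 1) = 2
      have dZB : ddist G.adj Z (W m 1) = 2 := by
        have hub : ddist G.adj Z (W m 1) ≤ 2 := by omega
        have hne0 : ddist G.adj Z (W m 1) ≠ 0 := by
          intro h0
          have : Z = W m 1 := (ddist_eq_zero_iff G.strong).mp h0
          rw [this] at dBZ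
          rw [ddist_self] at dBZ
          omega
        have hne1 : ddist G.adj Z (W m 1) ≠ 1 := by
          intro h1
          omega
        omega
      have hZB : tdist G.adj Z (W m 1) = (2, n) := tdist_eq_iff.mpr ⟨dZB, dBZ⟩
      constructor
      · intro t ht
        rw [hWsucc m t, hWsucc m (t + 1), if_pos ht]
        by_cases ht1 : t + 1 < n
        · rw [if_pos ht1]
          exact harc (t + 1) (by omega)
        · rw [if_neg ht1, ← hZdef]
          have htn : t + 1 = n := by omega
          rw [htn]
          exact adj_of_ddist_eq_one G.strong dXZ
      · rw [hWsucc m n, hWsucc m 0, if_neg (by omega), if_pos (by omega), ← hZdef]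
        exact hZB
  -- the anchor arcs
  have hs_i : ∀ m, tdist G.adj (W m n) (W (m + 1) n) = (1, n + 1) := by
    intro m
    have hpex : ∃ Z, tdist G.adj (W m n) Z = (1, n + 1) ∧
        tdist G.adj Z (W m 0) = (1, n + 1) := exists_witness G hh (hINV m).2
    have hpick : pick (W m n) (W m 0) = hpex.choose := dif_pos hpex
    rw [hWsucc m n, if_neg (by omega), hpick]
    exact hpex.choose_spec.1
  -- coherence
  have hcoh : ∀ j m t, t + j ≤ n → W (m + j) t = W m (t + j) := by
    intro j
    induction j with
    | zero => intro m t _; rfl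
    | succ j ihj =>
      intro m t ht
      have h1 : W (m + j + 1) t = W (m + j) (t + 1) := by
        rw [hWsucc (m + j) t, if_pos (by omega)]
      have h2 : W (m + j) (t + 1) = W m (t + 1 + j) := ihj m (t + 1) (by omega)
      have h3 : t + 1 + j = t + (j + 1) := by omega
      rw [show m + (j + 1) = m + j + 1 by omega, h1, h2, h3]
  have hs_h : ∀ m, tdist G.adj (W (m + n) n) (W m n) = (2, n) := by
    intro m
    have := (hINV (m + n)).2
    rwa [hcoh n m 0 (by omega), Nat.zero_add] at this
  -- out-sets
  have per1 : ∀ m, {w : V | tdist G.adj (W m n) w = (1, n + 1)} =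
      {w : V | tdist G.adj (W (m + n + 2) n) w = (1, n + 1)} := by
    intro m
    have h := np_shift G (1, n + 1) (2, n) hh (hs_h m) rfl (hs_i (m + n)) (hs_i (m + n + 1))
    rwa [show m + n + 1 + 1 = m + n + 2 by omega] at h
  -- all-e circuit at W 0 n = x
  obtain ⟨c, hc0, hcn1, hcarc⟩ := exists_e_circuit G n hn e_att hPure (W 0 n)
  have circ : ∀ j, j ≤ n + 1 → {w : V | tdist G.adj (c j) w = (1, n + 1)} =
      {w : V | tdist G.adj (W (2 * j) n) w = (1, n + 1)} := by
    intro j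
    induction j with
    | zero =>
      intro _
      rw [hc0]
    | succ j ihj =>
      intro hj
      have h := np_shift G (1, n + 1) (1, n) hCp (hcarc j (by omega)) (ihj (by omega))
        (hs_i (2 * j)) (hs_i (2 * j + 1))
      rwa [show 2 * j + 1 + 1 = 2 * (j + 1) by omega] at h
  have base2 : {w : V | tdist G.adj (W 0 n) w = (1, n + 1)} =
      {w : V | tdist G.adj (W (2 * n + 2) n) w = (1, n + 1)} := by
    have := circ (n + 1) le_rfl
    rw [hcn1] at this
    rwa [show 2 * (n + 1) = 2 * n + 2 by omega] at this
  have genper : ∀ m, {w : V | tdist G.adj (W m n) w = (1, n + 1)} =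
      {w : V | tdist G.adj (W (m + (2 * n + 2)) n) w = (1, n + 1)} := by
    intro m
    induction m with
    | zero =>
      have := base2
      rwa [show (2 * n + 2) = 0 + (2 * n + 2) by omega] at this
    | succ m ihm =>
      have := np_step G (1, n + 1) ihm (hs_i m) (hs_i (m + (2 * n + 2)))
      rwa [show m + (2 * n + 2) + 1 = m + 1 + (2 * n + 2) by omega] at this
  -- combine: out-set of W 0 equals out-set of W 2
  have key : {w : V | tdist G.adj (W 0 n) w = (1, n + 1)} =
      {w : V | tdist G.adj (W 2 n) w = (1, n + 1)} := by
    have h1 := per1 0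
    have h2 := per1 (n + 2)
    have h3 := genper 2
    rw [show (0 : ℕ) + n + 2 = n + 2 by omega] at h1
    rw [show n + 2 + n + 2 = 2 * n + 4 by omega] at h2
    rw [show 2 + (2 * n + 2) = 2 * n + 4 by omega] at h3
    rw [h1, h2, ← h3]
  -- contradiction
  have hmem : W 1 n ∈ {w : V | tdist G.adj (W 0 n) w = (1, n + 1)} := hs_i 0
  rw [key] at hmem
  have h21 : tdist G.adj (W 2 n) (W 1 n) = (1, n + 1) := hmem
  have h12 : tdist G.adj (W 2 n) (W 1 n) = ((1 : ℕ), n + 1).swap := by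
    have hs1 := hs_i 1
    norm_num at hs1
    rw [tdist_swap, hs1]
  rw [h21] at h12
  have : (1 : ℕ) = n + 1 := congrArg Prod.fst h12
  omega

end Exclusion

section Final

variable {V : Type*} [Fintype V] (G : CTWDR V) (n : ℕ)

lemma not_i (hn : 1 ≤ n)
    (hh : pnum G.adj (1, n + 1) (1, n + 1) (1, n + 1) ≠ 0) : False := by
  obtain ⟨x, y, hxy⟩ := attained_of_pnum_ne_zero G hh
  obtain ⟨z, hz1, hz2⟩ := exists_witness G hh hxy
  have i_att : ∃ u w : V, tdist G.adj u w = (1, n + 1) := ⟨x, y, hxy⟩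
  have h1 : {w : V | tdist G.adj z w = (1, n + 1)} = {w : V | tdist G.adj y w = (1, n + 1)} :=
    same_out_of_common_in G (1, n + 1) hz1 hxy
  have h2 : {w : V | tdist G.adj w z = (1, n + 1)} = {w : V | tdist G.adj w y = (1, n + 1)} :=
    same_in_of_same_out G (1, n + 1) i_att h1
  have hz : z ∈ {w : V | tdist G.adj w y = (1, n + 1)} := hz2
  rw [← h2] at hz
  have : tdist G.adj z z = (1, n + 1) := hz
  rw [tdist_self] at this
  have := congrArg Prod.fst this
  simp at this

/-- Core classification : every relation in `Γ_{1,n+1}^2` is `(1,n)` or `(2,n+1)`. -/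
lemma gamma2_classify (hn : 1 ≤ n)
    (hCp : pnum G.adj (1, n) (1, n + 1) (1, n + 1) ≠ 0)
    (hPure : G.Pure (n + 1)) (h : ℕ × ℕ)
    (hh : pnum G.adj h (1, n + 1) (1, n + 1) ≠ 0) :
    h = (1, n) ∨ h = (2, n + 1) := by
  obtain ⟨x, y, hxy⟩ := attained_of_pnum_ne_zero G hh
  obtain ⟨z, hz1, hz2⟩ := exists_witness G hh hxy
  have hdxz := tdist_eq_iff.mp hz1
  have hdzy := tdist_eq_iff.mp hz2
  have hne : x ≠ y := by
    intro heq
    subst heq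
    have hzx : tdist G.adj z x = ((1 : ℕ), n + 1).swap := tdist_swap_iff.mpr hz1
    rw [hz2] at hzx
    have := congrArg Prod.fst hzx
    simp [Prod.swap] at this
    omega
  have hd1 : ddist G.adj x y ≤ 2 := by
    have hw : HasWalk G.adj x y (1 + 1) :=
      (hasWalk_one.mpr (adj_of_tdist G hz1)).comp (hasWalk_one.mpr (adj_of_tdist G hz2))
    have := ddist_le hw
    omega
  have hd2 : ddist G.adj x y ≠ 0 := fun h0 => hne ((ddist_eq_zero_iff G.strong).mp h0)
  have hd3 : n ≤ ddist G.adj y x := by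
    have htri := ddist_triangle G.strong z y x
    rw [hdzy.1] at htri
    rw [hdxz.2] at htri
    omega
  have hd4 : ddist G.adj y x ≤ n + 1 := ddist_back_le G n hn hCp hPure hh hxy
  have hform : h = (ddist G.adj x y, ddist G.adj y x) := hxy.symm
  have hA : ddist G.adj x y = 1 ∨ ddist G.adj x y = 2 := by omega
  have hB : ddist G.adj y x = n ∨ ddist G.adj y x = n + 1 := by omega
  rcases hA with hA | hA <;> rcases hB with hB | hB
  · left; rw [hform, hA, hB]
  · exfalso
    apply not_i G n hn
    rw [hform, hA, hB] at hh
    exact hh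
  · exfalso
    apply no_two_n G n hn hCp hPure
    rw [hform, hA, hB] at hh
    exact hh
  · right; rw [hform, hA, hB]

end Final


/-- Lemma 2.5(ii): if `C(q)` exists, then
`Γ_{1,q-1}^2 = {Γ_{1,q-2}}` or `Γ_{1,q-1}^2 = {Γ_{1,q-2}, Γ_{2,q-1}}`. -/
theorem stmt5 {V : Type*} [Fintype V] (G : CTWDR V) (q : ℕ) (hC : G.Cexists q) :
    G.pow (1, q - 1) 2 = {(1, q - 2)} ∨
    G.pow (1, q - 1) 2 = ({(1, q - 2), (2, q - 1)} : Set (ℕ × ℕ)) := by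
  obtain ⟨hCp, hPure⟩ := hC
  have hpow : G.pow (1, q - 1) 2 = {h : ℕ × ℕ | pnum G.adj h (1, q - 1) (1, q - 1) ≠ 0} := by
    have h2 : G.pow (1, q - 1) 2 = G.prodS (G.pow (1, q - 1) 1) {(1, q - 1)} := rfl
    rw [h2]
    ext h
    simp [CTWDR.prodS, CTWDR.pow]
  have hq3 : 3 ≤ q := by
    by_contra hlt
    push_neg at hlt
    obtain ⟨u, w, huw⟩ := attained_of_pnum_ne_zero G hCp
    have h2 : q - 2 = 0 := by omega
    rw [h2] at huw
    have hd := tdist_eq_iff.mp huw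
    have hwu : w = u := (ddist_eq_zero_iff G.strong).mp hd.2
    rw [hwu, ddist_self] at hd
    omega
  have hq2 : q - 1 = (q - 2) + 1 := by omega
  set n := q - 2 with hndef
  have hn : 1 ≤ n := by omega
  rw [hq2] at hCp hPure hpow ⊢
  by_cases hEx : pnum G.adj (2, n + 1) (1, n + 1) (1, n + 1) ≠ 0
  · right
    rw [hpow]
    ext h
    simp only [Set.mem_setOf_eq, Set.mem_insert_iff, Set.mem_singleton_iff]
    constructor
    · exact fun hh => gamma2_classify G n hn hCp hPure h hh
    · rintro (rfl | rfl)
      · exact hCp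
      · exact hEx
  · left
    rw [hpow]
    ext h
    simp only [Set.mem_setOf_eq, Set.mem_singleton_iff]
    constructor
    · intro hh
      rcases gamma2_classify G n hn hCp hPure h hh with rfl | rfl
      · rfl
      · exact absurd hh hEx
    · rintro rfl
      exact hCp
end
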